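/- arXiv:2101.12747 — 7 statements merged into one kernel-verified Lean document; each statement's English description precedes it below -/
import Mathlib

section
/- Let x ∈ ℤ₂, let ℓ ≥ 1, let u be the prefix of length ℓ of the parity vector of x, and let h be the height of u. Then 2^ℓ · T^ℓ(x) = φ(u) + 3^h · x in ℤ₂. -/
/-- Height of a finite binary word: the number of `1`s (`true`s). -/
def wordHeight (u : List Bool) : ℕ := u.count true

/-- Auxiliary function realizing the recursion of `φ` on the reversed word. -/
def phiAux : List Bool → ℕ
  | [] => 0
  | b :: r => if b then 3 * phiAux r + 2 ^ r.length else phiAux r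

/-- The function `φ` on finite binary words: `φ(ε)=0`, `φ(u0)=φ(u)`,
`φ(u1)=3φ(u)+2^{ℓ(u)}`. -/
def phi (u : List Bool) : ℕ := phiAux u.reverse

/-- The prefix of length `ℓ` of the parity vector of `x ∈ ℤ₂` under the map `T`:
its `k`-th digit is `T^k(x) mod 2`. -/
noncomputable def parityPrefix (T : ℤ_[2] → ℤ_[2]) (x : ℤ_[2]) (ℓ : ℕ) : List Bool :=
  (List.range ℓ).map fun k => decide (PadicInt.toZMod (T^[k] x) = 1)

lemma phi_append (u : List Bool) (b : Bool) :
    phi (u ++ [b]) = if b then 3 * phi u + 2 ^ u.length else phi u := by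
  simp [phi, phiAux]

lemma height_append (u : List Bool) (b : Bool) :
    wordHeight (u ++ [b]) = wordHeight u + (if b then 1 else 0) := by
  cases b <;> simp [wordHeight]

lemma parityPrefix_succ (T : ℤ_[2] → ℤ_[2]) (x : ℤ_[2]) (ℓ : ℕ) :
    parityPrefix T x (ℓ + 1) =
      parityPrefix T x ℓ ++ [decide (PadicInt.toZMod (T^[ℓ] x) = 1)] := by
  simp [parityPrefix, List.range_succ]

/-- If `T` is the 3x+1 map on `ℤ₂` (characterized by `2·T(x) = 3x+1` for odd `x`
and `2·T(x) = x` for even `x`), `u` is the length-`ℓ` prefix (`ℓ ≥ 1`) of the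
parity vector of `x` and `h` its height, then `2^ℓ · T^ℓ(x) = φ(u) + 3^h · x`. -/
theorem stmt1 (T : ℤ_[2] → ℤ_[2])
    (hT : ∀ x : ℤ_[2], 2 * T x = if PadicInt.toZMod x = 1 then 3 * x + 1 else x)
    (x : ℤ_[2]) (ℓ : ℕ) (hℓ : 1 ≤ ℓ) :
    (2 : ℤ_[2]) ^ ℓ * T^[ℓ] x =
      (phi (parityPrefix T x ℓ) : ℤ_[2]) +
        (3 : ℤ_[2]) ^ wordHeight (parityPrefix T x ℓ) * x := by
  clear hℓ
  induction ℓ with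
  | zero => simp [parityPrefix, phi, phiAux, wordHeight]
  | succ n ih =>
    have hlen : (parityPrefix T x n).length = n := by simp [parityPrefix]
    rw [parityPrefix_succ, phi_append, height_append, hlen,
      Function.iterate_succ_apply', pow_succ, mul_comm ((2:ℤ_[2])^n) 2,
      mul_assoc, mul_left_comm, hT (T^[n] x)]
    by_cases h : PadicInt.toZMod (T^[n] x) = 1
    · simp only [h, decide_true, if_true]
      push_cast
      linear_combination (3:ℤ_[2]) * ih
    · simp only [h, decide_false, if_false, add_zero]
      push_cast
      linear_combination ih
end

section
/- Let u and w be nonempty finite binary words. If T_u(0) = T_{uw}(0), where uw denotes the concatenation of u and w, then every digit of uw equals 0. In particular, if v is an infinite binary word whose first digit is 1, then the values T_{u}(0), as u ranges over the nonempty prefixes of v, are pairwise distinct and all nonzero. -/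
/-- The maps `T_0(x) = x/2` and `T_1(x) = (3x+1)/2` on `ℝ`. -/
noncomputable def Tb (b : Bool) (x : ℝ) : ℝ := if b then (3 * x + 1) / 2 else x / 2

/-- For a finite binary word `u = v_0 v_1 ⋯ v_{ℓ−1}`, the composite map
`T_u = T_{v_{ℓ−1}} ∘ ⋯ ∘ T_{v_1} ∘ T_{v_0}` on `ℝ` (first digit applied first). -/
noncomputable def Tword : List Bool → ℝ → ℝ
  | [], x => x
  | b :: u, x => Tword u (Tb b x)

/-- The prefix of length `ℓ` of an infinite binary word `v`. -/
def wordPrefix (v : ℕ → Bool) (ℓ : ℕ) : List Bool := (List.range ℓ).map v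

lemma Tword_append (u w : List Bool) (x : ℝ) :
    Tword (u ++ w) x = Tword w (Tword u x) := by
  induction u generalizing x with
  | nil => rfl
  | cons b u ih => simp [Tword, ih]

lemma Tword_zero_of_all_false (u : List Bool) (h : true ∉ u) : Tword u 0 = 0 := by
  induction u with
  | nil => rfl
  | cons b u ih =>
    simp only [List.mem_cons, not_or] at h
    cases b with
    | false => simpa [Tword, Tb] using ih h.2
    | true => exact absurd rfl h.1

lemma Tword_affine (w : List Bool) :
    ∃ j C : ℕ, ∀ x : ℝ, Tword w x = (3 ^ j * x + C) / 2 ^ w.length := by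
  induction w with
  | nil => exact ⟨0, 0, fun x => by simp [Tword]⟩
  | cons b u ih =>
    obtain ⟨j, C, h⟩ := ih
    cases b with
    | false =>
      refine ⟨j, 2 * C, fun x => ?_⟩
      rw [show Tword (false :: u) x = Tword u (x / 2) by simp [Tword, Tb], h]
      push_cast
      rw [List.length_cons]
      field_simp
      ring
    | true =>
      refine ⟨j + 1, 3 ^ j + 2 * C, fun x => ?_⟩
      rw [show Tword (true :: u) x = Tword u ((3 * x + 1) / 2) by simp [Tword, Tb], h]
      push_cast
      rw [List.length_cons]
      field_simp
      ring

lemma even_pow_two {k : ℕ} (hk : 1 ≤ k) : Even (2 ^ k) :=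
  Nat.even_pow.mpr ⟨even_two, by omega⟩

lemma Tword_odd (u : List Bool) (h : true ∈ u) :
    ∃ c k : ℕ, Odd c ∧ 1 ≤ k ∧ Tword u 0 = c / 2 ^ k := by
  induction u using List.reverseRecOn with
  | nil => simp at h
  | append_singleton u b ih =>
    rw [Tword_append]
    by_cases hu : true ∈ u
    · obtain ⟨c, k, hc, hk, hval⟩ := ih hu
      rw [hval]
      cases b with
      | false =>
        refine ⟨c, k + 1, hc, by omega, ?_⟩
        show Tword [false] ((c : ℝ) / 2 ^ k) = (c : ℝ) / 2 ^ (k + 1)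
        simp only [Tword, Tb, if_false, Bool.false_eq_true]
        rw [pow_succ]
        ring
      | true =>
        refine ⟨3 * c + 2 ^ k, k + 1, ?_, by omega, ?_⟩
        · exact (((by decide : Odd 3).mul hc).add_even (even_pow_two hk))
        · show Tword [true] ((c : ℝ) / 2 ^ k) = _
          simp only [Tword, Tb, if_true]
          have h2 : (2 : ℝ) ^ k ≠ 0 := by positivity
          rw [pow_succ]
          push_cast
          field_simp
    · have hb : b = true := by
        rcases List.mem_append.mp h with h' | h'
        · exact absurd h' hu
        · exact (List.mem_singleton.mp h').symm
      subst hb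
      rw [Tword_zero_of_all_false u hu]
      exact ⟨1, 1, ⟨0, rfl⟩, le_refl 1, by norm_num [Tword, Tb]⟩

lemma Tword_ne_zero (u : List Bool) (h : true ∈ u) : Tword u 0 ≠ 0 := by
  obtain ⟨c, k, hc, _, hval⟩ := Tword_odd u h
  rw [hval]
  have hc0 : (0 : ℝ) < c := by exact_mod_cast hc.pos
  positivity

lemma part_a (u w : List Bool) (hu : u ≠ []) (hw : w ≠ [])
    (h : Tword u 0 = Tword (u ++ w) 0) : ∀ b ∈ u ++ w, b = false := by
  rw [Tword_append] at h
  have hall : true ∉ u ++ w := by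
    by_cases htu : true ∈ u
    · exfalso
      obtain ⟨c, k, hc, hk, hval⟩ := Tword_odd u htu
      obtain ⟨j, C, hwa⟩ := Tword_affine w
      rw [hval, hwa] at h
      have hm : 1 ≤ w.length := List.length_pos_iff.mpr hw
      have h2k : (2 : ℝ) ^ k ≠ 0 := by positivity
      have h2m : (2 : ℝ) ^ w.length ≠ 0 := by positivity
      have key : (c : ℝ) * 2 ^ w.length = 3 ^ j * c + C * 2 ^ k := by
        field_simp at h
        apply mul_right_cancel₀ h2k
        linear_combination (2 ^ k : ℝ) * h
      have keyN : c * 2 ^ w.length = 3 ^ j * c + C * 2 ^ k := by exact_mod_cast key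
      have hodd : Odd (3 ^ j * c) := ((by decide : Odd 3).pow).mul hc
      have heven1 : Even (c * 2 ^ w.length) := (even_pow_two hm).mul_left c
      have heven2 : Even (C * 2 ^ k) := (even_pow_two hk).mul_left C
      have : Even (3 ^ j * c) := (Nat.even_add.mp (keyN ▸ heven1)).mpr heven2
      exact (Nat.not_odd_iff_even.mpr this) hodd
    · have hx : Tword u 0 = 0 := Tword_zero_of_all_false u htu
      rw [hx] at h
      have htw : true ∉ w := fun hm => Tword_ne_zero w hm h.symm
      simp only [List.mem_append, not_or]
      exact ⟨htu, htw⟩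
  intro b hb
  cases b with
  | false => rfl
  | true => exact absurd hb hall

/-- (a) If `u, w` are nonempty finite binary words with `T_u(0) = T_{uw}(0)`,
then every digit of `uw` is `0`.  (b) Consequently, for an infinite binary word
`v` starting with digit `1`, the values `T_u(0)` over nonempty prefixes `u` of
`v` are pairwise distinct and all nonzero. -/
theorem stmt2 :
    (∀ u w : List Bool, u ≠ [] → w ≠ [] → Tword u 0 = Tword (u ++ w) 0 →
      ∀ b ∈ u ++ w, b = false) ∧
    (∀ v : ℕ → Bool, v 0 = true →
      (∀ m n : ℕ, 1 ≤ m → 1 ≤ n → m ≠ n →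
        Tword (wordPrefix v m) 0 ≠ Tword (wordPrefix v n) 0) ∧
      (∀ n : ℕ, 1 ≤ n → Tword (wordPrefix v n) 0 ≠ 0)) := by
  refine ⟨part_a, ?_⟩
  intro v hv
  have hmem : ∀ n, 1 ≤ n → true ∈ wordPrefix v n := by
    intro n hn
    have h0 : (0 : ℕ) ∈ List.range n := List.mem_range.mpr hn
    have := List.mem_map_of_mem (f := v) h0
    rw [hv] at this
    exact this
  have hne : ∀ n, 1 ≤ n → wordPrefix v n ≠ [] := by
    intro n hn
    apply List.length_pos_iff.mp
    simp [wordPrefix]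
    omega
  have key : ∀ m n, 1 ≤ m → m < n →
      Tword (wordPrefix v m) 0 ≠ Tword (wordPrefix v n) 0 := by
    intro m n hm hmn heq
    obtain ⟨d, hd, rfl⟩ : ∃ d, 1 ≤ d ∧ n = m + d := ⟨n - m, by omega, by omega⟩
    have hsplit : wordPrefix v (m + d) = wordPrefix v m ++ (List.range d).map (v ∘ (m + ·)) := by
      unfold wordPrefix
      rw [List.range_add, List.map_append, List.map_map]
    rw [hsplit] at heq
    have hwne : (List.range d).map (v ∘ (m + ·)) ≠ [] := by
      simp
      omega
    have hall := part_a _ _ (hne m hm) hwne heq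
    have : (true : Bool) = false :=
      hall true (List.mem_append.mpr (Or.inl (hmem m hm)))
    simp at this
  constructor
  · intro m n hm hn hmn
    rcases lt_or_gt_of_ne hmn with h | h
    · exact key m n hm h
    · exact fun e => key n m hn h e.symm
  · intro n hn
    exact Tword_ne_zero _ (hmem n hn)
end

section
/- Let u be a nonempty finite binary word with length ℓ and height h. Then, in the ring ℤ₂ of 2-adic integers (where 3 is invertible), T^ℓ(−φ(u)/3^h) = 0. -/
lemma phiAux_append (r : List Bool) (b : Bool) :
    phiAux (r ++ [b]) = 2 * phiAux r + (if b then 3 ^ r.count true else 0) := by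
  induction r with
  | nil => cases b <;> simp [phiAux]
  | cons c r ih =>
      cases c <;> cases b <;>
        simp [phiAux, ih, List.count_cons, pow_succ] <;> ring

lemma phi_cons (b : Bool) (v : List Bool) :
    phi (b :: v) = (if b then 3 ^ wordHeight v else 0) + 2 * phi v := by
  simp [phi, wordHeight, phiAux_append, List.count_reverse, add_comm]

lemma three_isUnit : IsUnit (3 : ℤ_[2]) := by
  rw [PadicInt.isUnit_iff]
  refine le_antisymm (PadicInt.norm_le_one _) (not_lt.mp fun hlt => ?_)
  have h : ‖((3 : ℤ) : ℤ_[2])‖ < 1 := by exact_mod_cast hlt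
  have := (PadicInt.norm_int_lt_one_iff_dvd (p := 2) 3).mp h
  omega

lemma step (T : ℤ_[2] → ℤ_[2])
    (hT : ∀ x : ℤ_[2], 2 * T x = if PadicInt.toZMod x = 1 then 3 * x + 1 else x)
    (b : Bool) (v : List Bool) :
    T (-(phi (b :: v) : ℤ_[2]) * Ring.inverse ((3 : ℤ_[2]) ^ wordHeight (b :: v)))
      = -(phi v : ℤ_[2]) * Ring.inverse ((3 : ℤ_[2]) ^ wordHeight v) := by
  have h3 : IsUnit (3 : ℤ_[2]) := three_isUnit
  have hu : ∀ n : ℕ, IsUnit ((3 : ℤ_[2]) ^ n) := fun n => h3.pow n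
  have hinv1 : ∀ n : ℕ, PadicInt.toZMod (Ring.inverse ((3 : ℤ_[2]) ^ n)) = 1 := by
    intro n
    have h1 : PadicInt.toZMod ((3 : ℤ_[2]) ^ n) = 1 := by
      have hc : ((3 : ℕ) : ℤ_[2]) = 3 := by push_cast; ring
      have h31 : (((3 : ℕ) : ZMod 2)) = 1 := by decide
      rw [map_pow, ← hc, map_natCast, h31, one_pow]
    have := congrArg PadicInt.toZMod (Ring.inverse_mul_cancel _ (hu n))
    rw [map_mul, map_one, h1, mul_one] at this
    exact this
  have hpar : ∀ x : ℤ_[2], ∀ n m : ℕ,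
      x = -(m : ℤ_[2]) * Ring.inverse ((3 : ℤ_[2]) ^ n) →
      PadicInt.toZMod x = (m : ZMod 2) := by
    intro x n m hx
    rw [hx, map_mul, map_neg, map_natCast, hinv1, mul_one]
    exact (ZMod.neg_eq_self_mod_two _)
  have hne : ∀ n : ℕ, ((3 : ℤ_[2]) ^ n) ≠ 0 := fun n => (hu n).ne_zero
  set hv := wordHeight v with hhv
  cases b with
  | true =>
      have hphi : (phi (true :: v) : ℤ_[2]) = 3 ^ hv + 2 * (phi v : ℤ_[2]) := by
        rw [phi_cons]; push_cast; simp [hhv]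
      have hh : wordHeight (true :: v) = hv + 1 := by
        simp [wordHeight, hhv, List.count_cons, add_comm]
      set x := -(phi (true :: v) : ℤ_[2]) * Ring.inverse ((3 : ℤ_[2]) ^ wordHeight (true :: v))
        with hx
      have hpx : PadicInt.toZMod x = 1 := by
        rw [hpar x (wordHeight (true :: v)) (phi (true :: v)) hx]
        have e3 : (3 : ZMod 2) = 1 := by decide
        have e2 : (2 : ZMod 2) = 0 := by decide
        have hn : phi (true :: v) = 3 ^ wordHeight v + 2 * phi v := by simp [phi_cons]
        rw [hn]; push_cast
        rw [e3, e2, one_pow, zero_mul, add_zero]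
      have h2 := hT x
      rw [hpx, if_pos rfl] at h2
      have key : 3 * x + 1 = 2 * (-(phi v : ℤ_[2]) * Ring.inverse ((3 : ℤ_[2]) ^ hv)) := by
        apply mul_right_cancel₀ (hne (hv + 1))
        have e1 : Ring.inverse ((3 : ℤ_[2]) ^ (hv + 1)) * (3 : ℤ_[2]) ^ (hv + 1) = 1 :=
          Ring.inverse_mul_cancel _ (hu _)
        have e2 : Ring.inverse ((3 : ℤ_[2]) ^ hv) * (3 : ℤ_[2]) ^ hv = 1 :=
          Ring.inverse_mul_cancel _ (hu _)
        calc (3 * x + 1) * (3 : ℤ_[2]) ^ (hv + 1)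
            = 3 * (-(3 ^ hv + 2 * (phi v : ℤ_[2]))) *
                (Ring.inverse ((3 : ℤ_[2]) ^ (hv + 1)) * (3 : ℤ_[2]) ^ (hv + 1))
              + 3 ^ (hv + 1) := by rw [hx, hh, hphi]; ring
          _ = -(6 * (phi v : ℤ_[2])) := by rw [e1]; ring
          _ = 2 * (-(phi v : ℤ_[2])) * (Ring.inverse ((3 : ℤ_[2]) ^ hv) * (3 : ℤ_[2]) ^ hv) * 3 := by
              rw [e2]; ring
          _ = 2 * (-(phi v : ℤ_[2]) * Ring.inverse ((3 : ℤ_[2]) ^ hv)) * (3 : ℤ_[2]) ^ (hv + 1) := by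
              ring
      rw [key] at h2
      exact mul_left_cancel₀ (two_ne_zero) h2
  | false =>
      have hphi : (phi (false :: v) : ℤ_[2]) = 2 * (phi v : ℤ_[2]) := by
        have hn : phi (false :: v) = 2 * phi v := by simp [phi_cons]
        rw [hn]; push_cast; ring
      have hh : wordHeight (false :: v) = hv := by
        simp [wordHeight, hhv, List.count_cons]
      set x := -(phi (false :: v) : ℤ_[2]) * Ring.inverse ((3 : ℤ_[2]) ^ wordHeight (false :: v))
        with hx
      have hpx : PadicInt.toZMod x = 0 := by
        rw [hpar x (wordHeight (false :: v)) (phi (false :: v)) hx]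
        have e2 : (2 : ZMod 2) = 0 := by decide
        have hn : phi (false :: v) = 2 * phi v := by simp [phi_cons]
        rw [hn]; push_cast; rw [e2, zero_mul]
      have h2 := hT x
      rw [hpx] at h2
      simp only [if_neg (by decide : (0 : ZMod 2) ≠ 1)] at h2
      have key : x = 2 * (-(phi v : ℤ_[2]) * Ring.inverse ((3 : ℤ_[2]) ^ hv)) := by
        rw [hx, hh, hphi]; ring
      nth_rewrite 2 [key] at h2
      exact mul_left_cancel₀ (two_ne_zero) h2

/-- If `T` is the 3x+1 map on `ℤ₂` and `u` is a nonempty finite binary word of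
length `ℓ` and height `h`, then `T^ℓ(−φ(u)/3^h) = 0`, where `/3^h` is
multiplication by the inverse of the unit `3^h` of `ℤ₂`. -/
theorem stmt3 (T : ℤ_[2] → ℤ_[2])
    (hT : ∀ x : ℤ_[2], 2 * T x = if PadicInt.toZMod x = 1 then 3 * x + 1 else x)
    (u : List Bool) (hu : u ≠ []) :
    T^[u.length] (-(phi u : ℤ_[2]) * Ring.inverse ((3 : ℤ_[2]) ^ wordHeight u)) = 0 := by
  clear hu
  induction u with
  | nil => simp [phi, phiAux]
  | cons b v ih =>
      rw [List.length_cons, Function.iterate_succ_apply, step T hT b v]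
      exact ih
end

section
/- Let x ∈ ℤ₂, let ℓ ≥ 1, let u be the prefix of length ℓ of the parity vector of x, and let h be the height of u. Then T^ℓ(x) = x if and only if x = φ(u)·(2^ℓ − 3^h)^{−1} in ℤ₂ (the integer 2^ℓ − 3^h is odd, hence a unit in ℤ₂). -/
lemma key (T : ℤ_[2] → ℤ_[2])
    (hT : ∀ x : ℤ_[2], 2 * T x = if PadicInt.toZMod x = 1 then 3 * x + 1 else x)
    (x : ℤ_[2]) : ∀ ℓ : ℕ,
    (2 : ℤ_[2]) ^ ℓ * T^[ℓ] x
      = 3 ^ wordHeight (parityPrefix T x ℓ) * x + (phi (parityPrefix T x ℓ) : ℤ_[2]) := by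
  intro ℓ
  induction ℓ with
  | zero => simp [parityPrefix, wordHeight, phi, phiAux]
  | succ n ih =>
    have hsplit : parityPrefix T x (n + 1)
        = parityPrefix T x n ++ [decide (PadicInt.toZMod (T^[n] x) = 1)] := by
      simp [parityPrefix, List.range_succ]
    have hlen : (parityPrefix T x n).length = n := by simp [parityPrefix]
    rw [hsplit, phi_append, hlen]
    have hh : wordHeight (parityPrefix T x n ++ [decide (PadicInt.toZMod (T^[n] x) = 1)])
        = wordHeight (parityPrefix T x n)
          + if PadicInt.toZMod (T^[n] x) = 1 then 1 else 0 := by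
      simp [wordHeight, List.count_append]
      by_cases h : PadicInt.toZMod (T^[n] x) = 1 <;> simp [h]
    rw [hh]
    have h2 := hT (T^[n] x)
    rw [Function.iterate_succ_apply', pow_succ]
    by_cases h : PadicInt.toZMod (T^[n] x) = 1
    · rw [if_pos h] at h2
      simp only [h, if_pos, decide_eq_true_eq]
      calc (2:ℤ_[2]) ^ n * 2 * T (T^[n] x) = 2 ^ n * (2 * T (T^[n] x)) := by ring
        _ = 2 ^ n * (3 * T^[n] x + 1) := by rw [h2]
        _ = 3 * (2 ^ n * T^[n] x) + 2 ^ n := by ring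
        _ = 3 * (3 ^ wordHeight (parityPrefix T x n) * x + (phi (parityPrefix T x n) : ℤ_[2]))
              + 2 ^ n := by rw [ih]
        _ = 3 ^ (wordHeight (parityPrefix T x n) + 1) * x
              + ((3 * phi (parityPrefix T x n) + 2 ^ n : ℕ) : ℤ_[2]) := by
            push_cast; ring
    · rw [if_neg h] at h2
      simp only [h, decide_eq_true_eq, if_neg, if_false, add_zero]
      calc (2:ℤ_[2]) ^ n * 2 * T (T^[n] x) = 2 ^ n * (2 * T (T^[n] x)) := by ring
        _ = 2 ^ n * T^[n] x := by rw [h2]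
        _ = _ := ih

/-- If `T` is the 3x+1 map on `ℤ₂`, `x ∈ ℤ₂`, `ℓ ≥ 1`, `u` is the length-`ℓ`
prefix of the parity vector of `x` and `h` its height, then `T^ℓ(x) = x` if and
only if `x = φ(u)·(2^ℓ − 3^h)⁻¹` (the element `2^ℓ − 3^h` is odd, hence a unit
in `ℤ₂`, and its inverse is `Ring.inverse (2^ℓ − 3^h)`). -/
theorem stmt6 (T : ℤ_[2] → ℤ_[2])
    (hT : ∀ x : ℤ_[2], 2 * T x = if PadicInt.toZMod x = 1 then 3 * x + 1 else x)
    (x : ℤ_[2]) (ℓ : ℕ) (hℓ : 1 ≤ ℓ) :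
    T^[ℓ] x = x ↔
      x = (phi (parityPrefix T x ℓ) : ℤ_[2]) *
        Ring.inverse ((2 : ℤ_[2]) ^ ℓ - (3 : ℤ_[2]) ^ wordHeight (parityPrefix T x ℓ)) := by
  set u := parityPrefix T x ℓ with hu
  set h := wordHeight u with hh
  set c : ℤ_[2] := (2 : ℤ_[2]) ^ ℓ - (3 : ℤ_[2]) ^ h with hc
  -- c is a unit
  have htoZ : PadicInt.toZMod c ≠ 0 := by
    have h2 : (PadicInt.toZMod (2 : ℤ_[2]) : ZMod 2) = 0 := by
      have : ((2:ℕ) : ℤ_[2]) = 2 := by norm_num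
      rw [← this, map_natCast]; decide
    have h3 : (PadicInt.toZMod (3 : ℤ_[2]) : ZMod 2) = 1 := by
      have : ((3:ℕ) : ℤ_[2]) = 3 := by norm_num
      rw [← this, map_natCast]; decide
    have : PadicInt.toZMod c = 0 ^ ℓ - 1 ^ h := by
      rw [hc, map_sub, map_pow, map_pow, h2, h3]
    rw [this, zero_pow (by omega), one_pow, zero_sub]
    decide
  have hcu : IsUnit c := by
    by_contra hcu
    have : c ∈ IsLocalRing.maximalIdeal ℤ_[2] := by
      rw [IsLocalRing.mem_maximalIdeal]; exact hcu
    rw [← PadicInt.ker_toZMod, RingHom.mem_ker] at this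
    exact htoZ this
  have hkey := key T hT x ℓ
  rw [← hu, ← hh] at hkey
  rw [Ring.eq_mul_inverse_iff_mul_eq x (phi u : ℤ_[2]) c hcu]
  have h2ne : (2 : ℤ_[2]) ^ ℓ ≠ 0 := pow_ne_zero _ (by norm_num)
  constructor
  · intro hx
    rw [hx] at hkey
    rw [hc]; linear_combination hkey
  · intro hx
    have : (2 : ℤ_[2]) ^ ℓ * T^[ℓ] x = 2 ^ ℓ * x := by
      rw [hkey]; rw [hc] at hx; linear_combination -hx
    exact mul_left_cancel₀ h2ne this
end

section
/- Let u be a finite binary word with length ℓ ≥ 1 and height h ≥ 1. Then, in the p-adic absolute value on ℚ: |(−φ(u)/3^h) − φ(u)/(2^ℓ − 3^h)|₂ ≤ 2^{−ℓ}, and |φ(u)/2^ℓ − φ(u)/(2^ℓ − 3^h)|₃ = 3^{−h}. -/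
lemma phiAux_not_dvd (l : List Bool) (h : true ∈ l) : ¬ 3 ∣ phiAux l := by
  induction l with
  | nil => simp at h
  | cons b r ih =>
    cases b with
    | true =>
      simp only [phiAux, if_true]
      intro hd
      have h2 : 3 ∣ 2 ^ r.length := (Nat.dvd_add_right ⟨phiAux r, rfl⟩).mp hd
      have := Nat.Prime.dvd_of_dvd_pow (by norm_num : Nat.Prime 3) h2
      norm_num at this
    | false =>
      have hr : true ∈ r := by simpa using h
      simpa [phiAux] using ih hr

lemma phi_not_dvd (u : List Bool) (hh : 1 ≤ wordHeight u) : ¬ 3 ∣ phi u := by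
  apply phiAux_not_dvd
  rw [List.mem_reverse]
  have : 0 < u.count true := hh
  exact List.count_pos_iff.mp this

lemma padicNorm_pow (p : ℕ) [hp : Fact p.Prime] (n : ℕ) :
    padicNorm p ((p : ℚ) ^ n) = ((p : ℚ) ^ n)⁻¹ := by
  induction n with
  | zero => simp
  | succ n ih =>
    rw [pow_succ, padicNorm.mul, ih, padicNorm.padicNorm_p_of_prime, mul_inv]

/-- For a finite binary word `u` of length `ℓ ≥ 1` and height `h ≥ 1`:
`|(−φ(u)/3^h) − φ(u)/(2^ℓ − 3^h)|₂ ≤ 2^{−ℓ}` and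
`|φ(u)/2^ℓ − φ(u)/(2^ℓ − 3^h)|₃ = 3^{−h}`. -/
theorem stmt16 (u : List Bool) (hl : 1 ≤ u.length) (hh : 1 ≤ wordHeight u) :
    padicNorm 2 (-(phi u : ℚ) / 3 ^ wordHeight u -
        (phi u : ℚ) / ((2 : ℚ) ^ u.length - 3 ^ wordHeight u)) ≤
      ((2 : ℚ) ^ u.length)⁻¹ ∧
    padicNorm 3 ((phi u : ℚ) / 2 ^ u.length -
        (phi u : ℚ) / ((2 : ℚ) ^ u.length - 3 ^ wordHeight u)) =
      ((3 : ℚ) ^ wordHeight u)⁻¹ := by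
  set N := phi u with hN
  set l := u.length with hldef
  set h := wordHeight u with hhdef
  -- the denominator as an integer
  set D : ℤ := 2 ^ l - 3 ^ h with hD
  have hDodd : ¬ (2 : ℤ) ∣ D := by
    intro hd
    have h2 : (2 : ℤ) ∣ 2 ^ l := dvd_pow_self 2 (by omega)
    have h3 : (2 : ℤ) ∣ 3 ^ h := by
      have : (2:ℤ) ∣ (2^l - D) := dvd_sub h2 hd
      simpa [hD] using this
    have := (Int.Prime.dvd_pow' (by norm_num) h3 : (2:ℤ) ∣ 3)
    norm_num at this
  have hD3 : ¬ (3 : ℤ) ∣ D := by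
    intro hd
    have h3 : (3 : ℤ) ∣ 3 ^ h := dvd_pow_self 3 (by omega)
    have h2 : (3 : ℤ) ∣ 2 ^ l := by
      have : (3:ℤ) ∣ (D + 3^h) := dvd_add hd h3
      simpa [hD] using this
    have := (Int.Prime.dvd_pow' (by norm_num) h2 : (3:ℤ) ∣ 2)
    norm_num at this
  have hDne : D ≠ 0 := by intro h0; exact hDodd (h0 ▸ dvd_zero 2)
  have hDQ : ((2 : ℚ) ^ l - 3 ^ h) = (D : ℚ) := by push_cast [hD]; ring
  have hDQne : ((2 : ℚ) ^ l - 3 ^ h) ≠ 0 := by rw [hDQ]; exact_mod_cast hDne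
  have h2ne : ((2 : ℚ) ^ l) ≠ 0 := by positivity
  have h3ne : ((3 : ℚ) ^ h) ≠ 0 := by positivity
  have hN3 : ¬ 3 ∣ N := phi_not_dvd u hh
  have hNne : (N : ℚ) ≠ 0 := by
    intro h0
    have : N = 0 := by exact_mod_cast h0
    exact hN3 (this ▸ dvd_zero 3)
  have hnormD2 : padicNorm 2 (D : ℚ) = 1 := (padicNorm.int_eq_one_iff D).2 hDodd
  have hnormD3 : padicNorm 3 (D : ℚ) = 1 := (padicNorm.int_eq_one_iff D).2 hD3
  constructor
  · have key : -(N : ℚ) / 3 ^ h - (N : ℚ) / ((2 : ℚ) ^ l - 3 ^ h)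
        = -((N : ℚ) * 2 ^ l / (3 ^ h * ((2 : ℚ) ^ l - 3 ^ h))) := by
      field_simp
      ring
    have h2pow : padicNorm 2 ((2 : ℚ) ^ l) = ((2 : ℚ) ^ l)⁻¹ := by
      exact_mod_cast padicNorm_pow 2 l
    rw [key, padicNorm.neg, padicNorm.div, padicNorm.mul, padicNorm.mul,
      h2pow, hDQ, hnormD2]
    have h3norm : padicNorm 2 ((3 : ℚ) ^ h) = 1 := by
      have : ((3 : ℚ) ^ h) = ((3 ^ h : ℕ) : ℚ) := by push_cast; ring
      rw [this, padicNorm.nat_eq_one_iff]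
      intro hd
      have := (Nat.Prime.dvd_of_dvd_pow (by norm_num) hd : 2 ∣ 3)
      norm_num at this
    rw [h3norm]
    have hNle : padicNorm 2 (N : ℚ) ≤ 1 := padicNorm.of_nat N
    have hpos : (0:ℚ) < ((2:ℚ)^l)⁻¹ := by positivity
    calc padicNorm 2 (N : ℚ) * ((2:ℚ)^l)⁻¹ / (1 * 1)
        = padicNorm 2 (N : ℚ) * ((2:ℚ)^l)⁻¹ := by ring
      _ ≤ 1 * ((2:ℚ)^l)⁻¹ := by
          exact mul_le_mul_of_nonneg_right hNle (le_of_lt hpos)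
      _ = ((2:ℚ)^l)⁻¹ := by ring
  · have key : (N : ℚ) / 2 ^ l - (N : ℚ) / ((2 : ℚ) ^ l - 3 ^ h)
        = -((N : ℚ) * 3 ^ h / (2 ^ l * ((2 : ℚ) ^ l - 3 ^ h))) := by
      field_simp
      ring
    have h3pow : padicNorm 3 ((3 : ℚ) ^ h) = ((3 : ℚ) ^ h)⁻¹ := by
      exact_mod_cast padicNorm_pow 3 h
    rw [key, padicNorm.neg, padicNorm.div, padicNorm.mul, padicNorm.mul,
      h3pow, hDQ, hnormD3]
    have h2norm : padicNorm 3 ((2 : ℚ) ^ l) = 1 := by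
      have : ((2 : ℚ) ^ l) = ((2 ^ l : ℕ) : ℚ) := by push_cast; ring
      rw [this, padicNorm.nat_eq_one_iff]
      intro hd
      have := (Nat.Prime.dvd_of_dvd_pow (by norm_num) hd : 3 ∣ 2)
      norm_num at this
    have hNnorm : padicNorm 3 (N : ℚ) = 1 := (padicNorm.nat_eq_one_iff N).2 hN3
    rw [h2norm, hNnorm]
    ring
end

section
/- Let α = log 2 / log 3 and for each integer i ≥ 1 set t_i = 2^{⌊(i−1)/α⌋}/3^i (these are the terms of the series −Φ_ℝ(1c_α)). Then the arithmetic means converge: lim_{m→∞} (1/m) ∑_{i=1}^m t_i = 1/(6 ln 2). -/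
open Filter

open Filter Finset Complex

noncomputable def bb : ℝ := Real.log 3 / Real.log 2

instance : Fact ((0:ℝ) < 1) := ⟨zero_lt_one⟩

lemma log2_pos : (0:ℝ) < Real.log 2 := Real.log_pos (by norm_num)
lemma log3_pos : (0:ℝ) < Real.log 3 := Real.log_pos (by norm_num)

lemma bb_irr : ∀ k j : ℤ, k ≠ 0 → (k : ℝ) * bb ≠ (j : ℝ) := by
  have key : ∀ k j : ℤ, 0 < k → (k : ℝ) * bb ≠ (j : ℝ) := by
    intro k j hk h
    have hlog : (k : ℝ) * Real.log 3 = (j : ℝ) * Real.log 2 := by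
      have := h
      rw [bb] at this
      field_simp at this
      linarith [this]
    have hjpos : 0 < j := by
      by_contra hj
      push_neg at hj
      have h1 : (0:ℝ) < (k:ℝ) * Real.log 3 :=
        mul_pos (by exact_mod_cast hk) log3_pos
      have h2 : (j:ℝ) * Real.log 2 ≤ 0 :=
        mul_nonpos_of_nonpos_of_nonneg (by exact_mod_cast hj) log2_pos.le
      linarith
    set K := k.toNat
    set J := j.toNat
    have hK : (K : ℝ) = (k : ℝ) := by exact_mod_cast Int.toNat_of_nonneg hk.le
    have hJ : (J : ℝ) = (j : ℝ) := by exact_mod_cast Int.toNat_of_nonneg hjpos.le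
    have hKpos : 0 < K := by omega
    have hreal : (3:ℝ) ^ K = 2 ^ J := by
      have h3 : Real.exp ((K:ℝ) * Real.log 3) = 3 ^ K := by
        rw [Real.exp_nat_mul, Real.exp_log (by norm_num)]
      have h2 : Real.exp ((J:ℝ) * Real.log 2) = 2 ^ J := by
        rw [Real.exp_nat_mul, Real.exp_log (by norm_num)]
      rw [← h3, ← h2, hK, hJ, hlog]
    have hnat : (3:ℕ) ^ K = 2 ^ J := by exact_mod_cast hreal
    have hJpos : 0 < J := by omega
    have hdvd : 2 ∣ 3 ^ K := by
      rw [hnat]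
      exact dvd_pow_self 2 hJpos.ne'
    have : (2:ℕ) ∣ 3 := Nat.Prime.dvd_of_dvd_pow Nat.prime_two hdvd
    norm_num at this
  intro k j hk h
  rcases lt_or_gt_of_ne hk with hneg | hpos
  · exact key (-k) (-j) (by omega) (by push_cast; linarith) 
  · exact key k j hpos h

lemma avg_geom_tendsto_zero {z : ℂ} (hz : ‖z‖ = 1) (h1 : z ≠ 1) :
    Tendsto (fun m : ℕ => (∑ n ∈ range m, z ^ n) / m) atTop (nhds 0) := by
  have hz1 : (0:ℝ) < ‖z - 1‖ := by
    simpa [sub_eq_zero] using h1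
  rw [tendsto_zero_iff_norm_tendsto_zero]
  apply squeeze_zero (fun m => norm_nonneg _) (g := fun m : ℕ => (2 / ‖z - 1‖) / m)
  · intro m
    rw [norm_div, Complex.norm_natCast, geom_sum_eq h1, norm_div]
    have hzm : ‖z ^ m - 1‖ ≤ 2 := by
      calc ‖z ^ m - 1‖ ≤ ‖z ^ m‖ + ‖(1:ℂ)‖ := norm_sub_le _ _
        _ ≤ 2 := by rw [norm_pow, hz, one_pow, norm_one]; norm_num
    gcongr
  · exact tendsto_const_div_atTop_nhds_zero_nat _

lemma weyl_fourier (k : ℤ) :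
    Tendsto (fun m : ℕ => (∑ n ∈ range m, (fourier k (((n : ℝ) * bb : ℝ) : AddCircle (1:ℝ)) : ℂ)) / m)
      atTop (nhds (∫ x in (0:ℝ)..1, (fourier k ((x : ℝ) : AddCircle (1:ℝ)) : ℂ))) := by
  rcases eq_or_ne k 0 with rfl | hk
  · simp only [fourier_zero]
    have h1 : ∀ᶠ m : ℕ in atTop, (∑ _n ∈ range m, (1:ℂ)) / m = 1 := by
      filter_upwards [eventually_ge_atTop 1] with m hm
      rw [Finset.sum_const, card_range, nsmul_eq_mul, mul_one, div_self]
      exact_mod_cast Nat.one_le_iff_ne_zero.mp hm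
    rw [tendsto_congr' h1]
    simp
  · set c : ℂ := 2 * Real.pi * I * k with hc
    have hfun : ∀ x : ℝ, (fourier k ((x : ℝ) : AddCircle (1:ℝ)) : ℂ) = Complex.exp (c * x) := by
      intro x
      rw [fourier_coe_apply]
      congr 1
      push_cast
      ring
    have hcne : c ≠ 0 := by
      simp only [hc]
      refine mul_ne_zero (mul_ne_zero (mul_ne_zero two_ne_zero ?_) I_ne_zero) ?_
      · exact_mod_cast Real.pi_ne_zero
      · exact_mod_cast hk
    have hint : (∫ x in (0:ℝ)..1, Complex.exp (c * x)) = 0 := by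
      rw [integral_exp_mul_complex hcne]
      have : Complex.exp (c * 1) = 1 := by
        rw [mul_one, hc]
        have : 2 * (Real.pi : ℂ) * I * k = k * (2 * Real.pi * I) := by ring
        rw [this]
        exact Complex.exp_int_mul_two_pi_mul_I k
      rw [Complex.ofReal_one, Complex.ofReal_zero, this, mul_zero, Complex.exp_zero, sub_self, zero_div]
    set z : ℂ := Complex.exp (c * bb) with hz
    have hzn : ∀ n : ℕ, Complex.exp (c * ((((n : ℝ) * bb : ℝ)) : ℂ)) = z ^ n := by
      intro n
      rw [hz, ← Complex.exp_nat_mul]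
      congr 1
      push_cast
      ring
    have heq : (fun m : ℕ => (∑ n ∈ range m, (fourier k (((n : ℝ) * bb : ℝ) : AddCircle (1:ℝ)) : ℂ)) / m)
        = fun m : ℕ => (∑ n ∈ range m, z ^ n) / m := by
      funext m
      rw [Finset.sum_congr rfl fun n _ => by rw [hfun ((n:ℝ) * bb), hzn n]]
    have hintf : (∫ x in (0:ℝ)..1, (fourier k ((x : ℝ) : AddCircle (1:ℝ)) : ℂ)) = 0 := by
      rw [intervalIntegral.integral_congr (g := fun x : ℝ => Complex.exp (c * x)) fun x _ => hfun x]
      exact hint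
    rw [heq, hintf]
    apply avg_geom_tendsto_zero
    · have : c * bb = ((2 * Real.pi * (k * bb) : ℝ) : ℂ) * I := by
        push_cast [hc]; ring
      rw [hz, this, Complex.norm_exp_ofReal_mul_I]
    · rw [hz, Ne, Complex.exp_eq_one_iff]
      rintro ⟨j, hj⟩
      have h3 : (((k : ℝ) * bb : ℝ) : ℂ) * (2 * Real.pi * I) = ((j:ℝ) : ℂ) * (2 * Real.pi * I) := by
        push_cast [hc] at hj ⊢
        linear_combination hj
      have h2 : (((k : ℝ) * bb : ℝ) : ℂ) = ((j:ℝ) : ℂ) := by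
        have hne : (2 * (Real.pi:ℂ) * I) ≠ 0 := by
          refine mul_ne_zero (mul_ne_zero two_ne_zero ?_) I_ne_zero
          exact_mod_cast Real.pi_ne_zero
        exact mul_right_cancel₀ hne h3
      exact bb_irr k j hk (by exact_mod_cast h2)

lemma coe_cont : Continuous ((↑) : ℝ → AddCircle (1:ℝ)) := continuous_quotient_mk'

lemma weyl_span (g : C(AddCircle (1:ℝ), ℂ))
    (hg : g ∈ Submodule.span ℂ (Set.range (@fourier 1))) :
    Tendsto (fun m : ℕ => (∑ n ∈ range m, g (((n : ℝ) * bb : ℝ) : AddCircle (1:ℝ))) / m)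
      atTop (nhds (∫ x in (0:ℝ)..1, g ((x : ℝ) : AddCircle (1:ℝ)))) := by
  induction hg using Submodule.span_induction with
  | mem x hx =>
    obtain ⟨k, rfl⟩ := hx
    exact weyl_fourier k
  | zero => simp [tendsto_const_nhds]
  | add x y hx hy ihx ihy =>
    have hintx : IntervalIntegrable (fun t : ℝ => x ((t : ℝ) : AddCircle (1:ℝ)))
        MeasureTheory.volume 0 1 := (x.continuous.comp coe_cont).intervalIntegrable _ _
    have hinty : IntervalIntegrable (fun t : ℝ => y ((t : ℝ) : AddCircle (1:ℝ)))
        MeasureTheory.volume 0 1 := (y.continuous.comp coe_cont).intervalIntegrable _ _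
    have := ihx.add ihy
    simp only [ContinuousMap.add_apply, ← intervalIntegral.integral_add hintx hinty] at this ⊢
    convert this using 2 with m
    rw [Finset.sum_add_distrib, add_div]
  | smul c x hx ihx =>
    have := ihx.const_mul c
    simp only [ContinuousMap.smul_apply, smul_eq_mul,
      ← intervalIntegral.integral_const_mul] at this ⊢
    convert this using 2 with m
    rw [← Finset.mul_sum, mul_div_assoc]

lemma weyl_cont (f : C(AddCircle (1:ℝ), ℂ)) :
    Tendsto (fun m : ℕ => (∑ n ∈ range m, f (((n : ℝ) * bb : ℝ) : AddCircle (1:ℝ))) / m)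
      atTop (nhds (∫ x in (0:ℝ)..1, f ((x : ℝ) : AddCircle (1:ℝ)))) := by
  rw [Metric.tendsto_atTop]
  intro ε hε
  have h1 : f ∈ (Submodule.span ℂ (Set.range (@fourier 1))).topologicalClosure := by
    rw [span_fourier_closure_eq_top]; trivial
  rw [← SetLike.mem_coe, Submodule.topologicalClosure_coe] at h1
  obtain ⟨g, hgspan, hgdist⟩ := Metric.mem_closure_iff.mp h1 (ε/4) (by positivity)
  rw [SetLike.mem_coe] at hgspan
  obtain ⟨N, hN⟩ := Metric.tendsto_atTop.mp (weyl_span g hgspan) (ε/4) (by positivity)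
  refine ⟨max N 1, fun m hm => ?_⟩
  have hm1 : (1:ℝ) ≤ m := by exact_mod_cast le_trans (le_max_right N 1) hm
  have hmpos : (0:ℝ) < m := by linarith
  have key1 : dist ((∑ n ∈ range m, f (((n : ℝ) * bb : ℝ) : AddCircle (1:ℝ))) / m)
      ((∑ n ∈ range m, g (((n : ℝ) * bb : ℝ) : AddCircle (1:ℝ))) / m) ≤ ε/4 := by
    rw [dist_eq_norm, div_sub_div_same, norm_div, Complex.norm_natCast]
    rw [div_le_iff₀ hmpos, ← Finset.sum_sub_distrib]
    calc ‖∑ n ∈ range m, (f (((n : ℝ) * bb : ℝ) : AddCircle (1:ℝ)) - g (((n : ℝ) * bb : ℝ) : AddCircle (1:ℝ)))‖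
        ≤ ∑ n ∈ range m, ‖f (((n : ℝ) * bb : ℝ) : AddCircle (1:ℝ)) - g (((n : ℝ) * bb : ℝ) : AddCircle (1:ℝ))‖ :=
          norm_sum_le _ _
      _ ≤ ∑ _n ∈ range m, (ε/4) := by
          apply Finset.sum_le_sum
          intro n _
          rw [← dist_eq_norm]
          exact (ContinuousMap.dist_apply_le_dist _).trans hgdist.le
      _ = m * (ε/4) := by rw [Finset.sum_const, card_range, nsmul_eq_mul]
      _ ≤ ε/4 * m := by ring_nf; exact le_rfl
  have key3 : dist (∫ x in (0:ℝ)..1, g ((x : ℝ) : AddCircle (1:ℝ)))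
      (∫ x in (0:ℝ)..1, f ((x : ℝ) : AddCircle (1:ℝ))) ≤ ε/4 := by
    have hintf : IntervalIntegrable (fun t : ℝ => f ((t : ℝ) : AddCircle (1:ℝ)))
        MeasureTheory.volume 0 1 := (f.continuous.comp coe_cont).intervalIntegrable _ _
    have hintg : IntervalIntegrable (fun t : ℝ => g ((t : ℝ) : AddCircle (1:ℝ)))
        MeasureTheory.volume 0 1 := (g.continuous.comp coe_cont).intervalIntegrable _ _
    rw [dist_eq_norm, ← intervalIntegral.integral_sub hintg hintf]
    have := intervalIntegral.norm_integral_le_of_norm_le_const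
      (C := ε/4) (f := fun x : ℝ => g ((x : ℝ) : AddCircle (1:ℝ)) - f ((x : ℝ) : AddCircle (1:ℝ)))
      (a := 0) (b := 1) ?_
    · simpa using this
    · intro x _
      rw [← dist_eq_norm]
      exact (ContinuousMap.dist_apply_le_dist _).trans (le_of_lt (by rwa [dist_comm] at hgdist))
  refine lt_of_le_of_lt (dist_triangle4 _
    ((∑ n ∈ range m, g (((n : ℝ) * bb : ℝ) : AddCircle (1:ℝ))) / m)
    (∫ x in (0:ℝ)..1, g ((x : ℝ) : AddCircle (1:ℝ))) _) ?_
  have h2 := hN m (le_of_max_le_left hm)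
  linarith

lemma weyl_periodic (F : ℝ → ℝ) (hFc : Continuous F) (hFp : Function.Periodic F 1) :
    Tendsto (fun m : ℕ => (∑ n ∈ range m, F ((n : ℝ) * bb)) / m)
      atTop (nhds (∫ x in (0:ℝ)..1, F x)) := by
  have hG : Continuous hFp.lift := Continuous.quotient_liftOn' hFc _
  set f : C(AddCircle (1:ℝ), ℂ) :=
    ⟨fun z => ((hFp.lift z : ℝ) : ℂ), Complex.continuous_ofReal.comp hG⟩ with hf
  have h := weyl_cont f
  have hfx : ∀ x : ℝ, f ((x : ℝ) : AddCircle (1:ℝ)) = ((F x : ℝ) : ℂ) := by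
    intro x
    simp only [hf, ContinuousMap.coe_mk, Function.Periodic.lift_coe]
  simp only [hfx] at h
  have hsum : ∀ m : ℕ, (∑ n ∈ range m, ((F ((n : ℝ) * bb) : ℝ) : ℂ)) / (m : ℂ)
      = (((∑ n ∈ range m, F ((n : ℝ) * bb)) / m : ℝ) : ℂ) := by
    intro m
    push_cast
    ring
  simp only [hsum] at h
  rw [intervalIntegral.integral_ofReal] at h
  exact tendsto_ofReal_iff.mp h

noncomputable def f₀ (x : ℝ) : ℝ := Real.exp (-(Int.fract x) * Real.log 2)

lemma exp_neg_log2 : Real.exp (-Real.log 2) = 1/2 := by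
  rw [Real.exp_neg, Real.exp_log (by norm_num)]; norm_num

lemma Kval : (∫ x in (0:ℝ)..1, Real.exp (-x * Real.log 2)) = 1/(2*Real.log 2) := by
  have hc : (-Real.log 2) ≠ 0 := neg_ne_zero.mpr log2_pos.ne'
  have h1 : (fun x : ℝ => Real.exp (-x * Real.log 2)) = fun x : ℝ => Real.exp (x * (-Real.log 2)) := by
    funext x; ring_nf
  rw [h1, intervalIntegral.integral_comp_mul_right Real.exp hc, integral_exp]
  rw [zero_mul, one_mul, Real.exp_zero, exp_neg_log2, smul_eq_mul]
  field_simp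
  ring

lemma exp_le_one_of_nonneg {u : ℝ} (hu : 0 ≤ u) : Real.exp (-u * Real.log 2) ≤ 1 := by
  rw [Real.exp_le_one_iff]
  have := mul_nonneg hu log2_pos.le
  linarith

lemma avg_f0 : Tendsto (fun m : ℕ => (∑ n ∈ range m, f₀ ((n:ℝ)*bb))/m) atTop
    (nhds (1/(2*Real.log 2))) := by
  set K : ℝ := 1/(2*Real.log 2) with hK
  rw [Metric.tendsto_atTop]
  intro ε hε
  set δ : ℝ := min (ε/2) (1/2) with hδ
  have hδpos : 0 < δ := lt_min (by positivity) (by norm_num)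
  have hδe : δ ≤ ε/2 := min_le_left _ _
  have hδh : δ ≤ 1/2 := min_le_right _ _
  have hδ1 : δ ≤ 1 := hδh.trans (by norm_num)
  set Ht : ℝ → ℝ := fun u => max (Real.exp (-u * Real.log 2)) (1 + (u - 1)/δ) with hHt
  set Gt : ℝ → ℝ := fun u => min (Real.exp (-u * Real.log 2)) (1/2 + u/δ) with hGt
  have hexpc : Continuous (fun u : ℝ => Real.exp (-u * Real.log 2)) :=
    Real.continuous_exp.comp (continuous_id.neg.mul continuous_const)
  have hHtc : Continuous Ht :=
    hexpc.max (continuous_const.add ((continuous_id.sub continuous_const).div_const δ))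
  have hGtc : Continuous Gt :=
    hexpc.min (continuous_const.add (continuous_id.div_const δ))
  have hHt0 : Ht 0 = 1 := by
    rw [hHt]
    simp only [neg_zero, zero_mul, Real.exp_zero]
    rw [max_eq_left]
    have : (0 - 1:ℝ)/δ ≤ 0 := by
      rw [show (0-1:ℝ) = -1 by ring, neg_div]
      exact neg_nonpos.mpr (by positivity)
    linarith
  have hHt1 : Ht 1 = 1 := by
    rw [hHt]
    simp only [sub_self, zero_div, add_zero, one_mul, neg_one_mul]
    rw [exp_neg_log2]
    exact max_eq_right (by norm_num)
  have hGt0 : Gt 0 = 1/2 := by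
    rw [hGt]
    simp only [neg_zero, zero_mul, Real.exp_zero, zero_div, add_zero]
    exact min_eq_right (by norm_num)
  have hGt1 : Gt 1 = 1/2 := by
    rw [hGt]
    simp only [one_mul, neg_one_mul]
    rw [exp_neg_log2]
    apply min_eq_left
    have h : (0:ℝ) ≤ 1/δ := by positivity
    linarith
  have hHc : Continuous (Ht ∘ Int.fract) :=
    ContinuousOn.comp_fract'' hHtc.continuousOn (by rw [hHt0, hHt1])
  have hGc : Continuous (Gt ∘ Int.fract) :=
    ContinuousOn.comp_fract'' hGtc.continuousOn (by rw [hGt0, hGt1])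
  have hHp : Function.Periodic (Ht ∘ Int.fract) 1 := fun x => by
    simp [Function.comp, Int.fract_add_one]
  have hGp : Function.Periodic (Gt ∘ Int.fract) 1 := fun x => by
    simp [Function.comp, Int.fract_add_one]
  have hfrac_eq : ∀ {F : ℝ → ℝ}, F 0 = F 1 → Set.EqOn (F ∘ Int.fract) F (Set.uIcc (0:ℝ) 1) := by
    intro F h01 x hx
    rw [Set.uIcc_of_le (by norm_num)] at hx
    rcases lt_or_eq_of_le hx.2 with h | h
    · simp only [Function.comp_apply, Int.fract_eq_self.mpr ⟨hx.1, h⟩]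
    · subst h
      simp only [Function.comp_apply, Int.fract_one, h01]
  have hHint : (∫ x in (0:ℝ)..1, (Ht ∘ Int.fract) x) = ∫ x in (0:ℝ)..1, Ht x :=
    intervalIntegral.integral_congr (hfrac_eq (by rw [hHt0, hHt1]))
  have hGint : (∫ x in (0:ℝ)..1, (Gt ∘ Int.fract) x) = ∫ x in (0:ℝ)..1, Gt x :=
    intervalIntegral.integral_congr (hfrac_eq (by rw [hGt0, hGt1]))
  -- integral bound for Ht
  have hIH1 : IntervalIntegrable Ht MeasureTheory.volume 0 (1-δ) := hHtc.intervalIntegrable _ _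
  have hIH2 : IntervalIntegrable Ht MeasureTheory.volume (1-δ) 1 := hHtc.intervalIntegrable _ _
  have hIe1 : IntervalIntegrable (fun u : ℝ => Real.exp (-u * Real.log 2)) MeasureTheory.volume 0 (1-δ) := hexpc.intervalIntegrable _ _
  have hIe2 : IntervalIntegrable (fun u : ℝ => Real.exp (-u * Real.log 2)) MeasureTheory.volume (1-δ) 1 := hexpc.intervalIntegrable _ _
  have splitH : (∫ x in (0:ℝ)..(1-δ), Ht x) + (∫ x in (1-δ:ℝ)..1, Ht x) = ∫ x in (0:ℝ)..1, Ht x :=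
    intervalIntegral.integral_add_adjacent_intervals hIH1 hIH2
  have splitE : (∫ x in (0:ℝ)..(1-δ), Real.exp (-x * Real.log 2)) + (∫ x in (1-δ:ℝ)..1, Real.exp (-x * Real.log 2)) = K := by
    rw [intervalIntegral.integral_add_adjacent_intervals hIe1 hIe2, Kval, hK]
  have heqH : (∫ x in (0:ℝ)..(1-δ), Ht x) = ∫ x in (0:ℝ)..(1-δ), Real.exp (-x * Real.log 2) := by
    apply intervalIntegral.integral_congr
    intro u hu
    rw [Set.uIcc_of_le (by linarith)] at hu
    rw [hHt]
    simp only
    apply max_eq_left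
    have h1 : (u - 1)/δ ≤ -1 := by
      rw [div_le_iff₀ hδpos]
      linarith [hu.2]
    linarith [(Real.exp_pos (-u * Real.log 2)).le]
  have hbH2 : (∫ x in (1-δ:ℝ)..1, Ht x) ≤ δ := by
    have h1 : (∫ x in (1-δ:ℝ)..1, Ht x) ≤ ∫ _x in (1-δ:ℝ)..1, (1:ℝ) := by
      apply intervalIntegral.integral_mono_on (by linarith) hIH2 intervalIntegrable_const
      intro u hu
      apply max_le
      · exact exp_le_one_of_nonneg (by linarith [hu.1])
      · have : (u - 1)/δ ≤ 0 := by
          rw [div_le_iff₀ hδpos]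
          linarith [hu.2]
        linarith
    simpa using h1
  have hbE2 : (0:ℝ) ≤ ∫ x in (1-δ:ℝ)..1, Real.exp (-x * Real.log 2) :=
    intervalIntegral.integral_nonneg (by linarith) (fun u _ => (Real.exp_pos _).le)
  have BH : (∫ x in (0:ℝ)..1, Ht x) ≤ K + δ := by linarith [splitH, splitE, heqH, hbH2, hbE2]
  -- integral bound for Gt
  have hIG1 : IntervalIntegrable Gt MeasureTheory.volume 0 δ := hGtc.intervalIntegrable _ _
  have hIG2 : IntervalIntegrable Gt MeasureTheory.volume δ 1 := hGtc.intervalIntegrable _ _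
  have hIe3 : IntervalIntegrable (fun u : ℝ => Real.exp (-u * Real.log 2)) MeasureTheory.volume 0 δ := hexpc.intervalIntegrable _ _
  have hIe4 : IntervalIntegrable (fun u : ℝ => Real.exp (-u * Real.log 2)) MeasureTheory.volume δ 1 := hexpc.intervalIntegrable _ _
  have splitG : (∫ x in (0:ℝ)..δ, Gt x) + (∫ x in (δ:ℝ)..1, Gt x) = ∫ x in (0:ℝ)..1, Gt x :=
    intervalIntegral.integral_add_adjacent_intervals hIG1 hIG2
  have splitE2 : (∫ x in (0:ℝ)..δ, Real.exp (-x * Real.log 2)) + (∫ x in (δ:ℝ)..1, Real.exp (-x * Real.log 2)) = K := by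
    rw [intervalIntegral.integral_add_adjacent_intervals hIe3 hIe4, Kval, hK]
  have heqG : (∫ x in (δ:ℝ)..1, Gt x) = ∫ x in (δ:ℝ)..1, Real.exp (-x * Real.log 2) := by
    apply intervalIntegral.integral_congr
    intro u hu
    rw [Set.uIcc_of_le (by linarith)] at hu
    rw [hGt]
    simp only
    apply min_eq_left
    have h1 : (1:ℝ) ≤ u/δ := by
      rw [le_div_iff₀ hδpos]
      linarith [hu.1]
    have h2 : Real.exp (-u * Real.log 2) ≤ 1 := exp_le_one_of_nonneg (by linarith [hu.1])
    linarith
  have hbG1 : (0:ℝ) ≤ ∫ x in (0:ℝ)..δ, Gt x := by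
    apply intervalIntegral.integral_nonneg hδpos.le
    intro u hu
    apply le_min (Real.exp_pos _).le
    have : (0:ℝ) ≤ u/δ := div_nonneg hu.1 hδpos.le
    linarith
  have hbE3 : (∫ x in (0:ℝ)..δ, Real.exp (-x * Real.log 2)) ≤ δ := by
    have h1 : (∫ x in (0:ℝ)..δ, Real.exp (-x * Real.log 2)) ≤ ∫ _x in (0:ℝ)..δ, (1:ℝ) := by
      apply intervalIntegral.integral_mono_on hδpos.le hIe3 intervalIntegrable_const
      intro u hu
      exact exp_le_one_of_nonneg hu.1
    simpa using h1
  have BG : K - δ ≤ ∫ x in (0:ℝ)..1, Gt x := by linarith [splitG, splitE2, heqG, hbG1, hbE3]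
  -- Weyl applications
  have hHw := weyl_periodic (Ht ∘ Int.fract) hHc hHp
  have hGw := weyl_periodic (Gt ∘ Int.fract) hGc hGp
  rw [hHint] at hHw
  rw [hGint] at hGw
  obtain ⟨N₁, hN₁⟩ := Metric.tendsto_atTop.mp hHw (ε/2) (by positivity)
  obtain ⟨N₂, hN₂⟩ := Metric.tendsto_atTop.mp hGw (ε/2) (by positivity)
  refine ⟨max N₁ N₂, fun m hm => ?_⟩
  have h1 := hN₁ m (le_of_max_le_left hm)
  have h2 := hN₂ m (le_of_max_le_right hm)
  rw [Real.dist_eq] at h1 h2 ⊢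
  rw [abs_lt] at h1 h2 ⊢
  have hmono1 : (∑ n ∈ range m, f₀ ((n:ℝ)*bb))/m ≤ (∑ n ∈ range m, (Ht ∘ Int.fract) ((n:ℝ)*bb))/m := by
    apply div_le_div_of_nonneg_right (Finset.sum_le_sum fun n _ => ?_) (Nat.cast_nonneg m)
    simp only [f₀, Function.comp_apply, hHt]
    exact le_max_left _ _
  have hmono2 : (∑ n ∈ range m, (Gt ∘ Int.fract) ((n:ℝ)*bb))/m ≤ (∑ n ∈ range m, f₀ ((n:ℝ)*bb))/m := by
    apply div_le_div_of_nonneg_right (Finset.sum_le_sum fun n _ => ?_) (Nat.cast_nonneg m)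
    simp only [f₀, Function.comp_apply, hGt]
    exact min_le_left _ _
  constructor
  · linarith [h2.1, hmono2]
  · linarith [h1.2, hmono1]

lemma term_eq (n : ℕ) :
    (2 : ℝ) ^ ⌊(((1+n : ℕ) : ℝ) - 1) / (Real.log 2 / Real.log 3)⌋ / 3 ^ (1+n)
      = 1/3 * f₀ ((n:ℝ) * bb) := by
  set y : ℝ := (n:ℝ) * bb with hy
  have harg : (((1+n : ℕ) : ℝ) - 1) / (Real.log 2 / Real.log 3) = y := by
    rw [hy, bb]
    push_cast
    field_simp
    ring
  rw [harg]
  have hyl : Real.log 2 * y = n * Real.log 3 := by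
    rw [hy, bb]
    field_simp
  have h2 : (2:ℝ) ^ (⌊y⌋ : ℤ) = Real.exp (Real.log 2 * (y - Int.fract y)) := by
    rw [Int.self_sub_fract, ← Real.rpow_intCast 2 ⌊y⌋, Real.rpow_def_of_pos (by norm_num)]
  have h3 : (3:ℝ) ^ (1+n) = Real.exp (((1+n : ℕ) : ℝ) * Real.log 3) := by
    rw [Real.exp_nat_mul, Real.exp_log (by norm_num)]
  rw [h2, h3, ← Real.exp_sub]
  have h13 : (1:ℝ)/3 = Real.exp (-Real.log 3) := by
    rw [Real.exp_neg, Real.exp_log] <;> norm_num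
  rw [f₀, h13, ← Real.exp_add]
  congr 1
  push_cast
  linarith [hyl]

/-- For `α = log 2 / log 3` and `t_i = 2^{⌊(i−1)/α⌋}/3^i` (the terms of the
series `−Φ_ℝ(1c_α)`), the arithmetic means converge:
`(1/m) ∑_{i=1}^m t_i → 1/(6 ln 2)`. -/
theorem stmt18 :
    Tendsto (fun m : ℕ =>
        (∑ i ∈ Finset.Icc 1 m,
          (2 : ℝ) ^ ⌊((i : ℝ) - 1) / (Real.log 2 / Real.log 3)⌋ / 3 ^ i) / m)
      atTop (nhds (1 / (6 * Real.log 2))) := by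
  have h := avg_f0.const_mul (1/3 : ℝ)
  have hlim : (1/3 : ℝ) * (1/(2*Real.log 2)) = 1/(6*Real.log 2) := by ring
  rw [hlim] at h
  apply h.congr
  intro m
  rw [← Finset.Ico_add_one_right_eq_Icc, Finset.sum_Ico_eq_sum_range]
  simp only [Nat.add_sub_cancel]
  rw [Finset.sum_congr rfl fun n _ => term_eq n, ← Finset.mul_sum]
  ring
end

section
/- Let α = log 2 / log 3 and for each integer i ≥ 1 set t_i = 2^{⌊(i−1)/α⌋}/3^i (these are the terms of the series −Φ_ℝ(1c_α)). Then the geometric means converge: lim_{m→∞} (∏_{i=1}^m t_i)^{1/m} = √2/6. -/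
open Finset Filter

lemma zmod_range_sum {M : Type*} [AddCommMonoid M] (q : ℕ) [NeZero q] (g : ZMod q → M) :
    ∑ j ∈ Finset.range q, g j = ∑ x : ZMod q, g x := by
  refine Finset.sum_nbij' (fun i : ℕ => (i : ZMod q)) (fun x : ZMod q => x.val)
    (fun a _ => Finset.mem_univ _) (fun x _ => Finset.mem_range.mpr (ZMod.val_lt x))
    (fun a ha => ZMod.val_cast_of_lt (Finset.mem_range.mp ha))
    (fun x _ => ZMod.natCast_rightInverse x) (fun a _ => rfl)

lemma resid_sum {M : Type*} [AddCommMonoid M] (p q : ℕ) (hq : 0 < q) (hc : p.Coprime q)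
    (f : ℕ → M) :
    ∑ j ∈ Finset.range q, f ((j * p) % q) = ∑ k ∈ Finset.range q, f k := by
  haveI : NeZero q := ⟨hq.ne'⟩
  have h1 : ∀ j : ℕ, f ((j * p) % q) = (fun x : ZMod q => f x.val) ((j : ZMod q) * p) := by
    intro j
    simp only
    congr 1
    rw [show ((j : ZMod q) * p) = ((j * p : ℕ) : ZMod q) by push_cast; ring,
      ZMod.val_natCast]
  calc ∑ j ∈ Finset.range q, f ((j * p) % q)
      = ∑ j ∈ Finset.range q, (fun x : ZMod q => f x.val) ((j : ZMod q) * (p : ZMod q)) :=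
        Finset.sum_congr rfl fun j _ => h1 j
    _ = ∑ x : ZMod q, (fun x : ZMod q => f x.val) (x * (p : ZMod q)) :=
        zmod_range_sum q (fun x : ZMod q => f (x * (p : ZMod q)).val)
    _ = ∑ x : ZMod q, f x.val := by
        have hu : ((ZMod.unitOfCoprime p hc : (ZMod q)ˣ) : ZMod q) = (p : ZMod q) :=
          ZMod.coe_unitOfCoprime p hc
        rw [← hu]
        exact Fintype.sum_bijective _ (Units.mulRight_bijective (ZMod.unitOfCoprime p hc))
          _ _ (fun x => rfl)
    _ = ∑ k ∈ Finset.range q, f k := by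
        rw [← zmod_range_sum q (fun x : ZMod q => f x.val)]
        exact Finset.sum_congr rfl fun k hk => by
          simp only [ZMod.val_cast_of_lt (Finset.mem_range.mp hk)]

lemma hermite (q : ℕ) (hq : 0 < q) (y : ℝ) :
    ∑ k ∈ Finset.range q, ⌊y + (k : ℝ) / q⌋ = ⌊(q : ℝ) * y⌋ := by
  have hq' : (0 : ℝ) < q := by exact_mod_cast hq
  set u := Int.fract y with hu
  have hu0 : 0 ≤ u := Int.fract_nonneg y
  have hu1 : u < 1 := Int.fract_lt_one y
  have hfl : (⌊y⌋ : ℝ) + u = y := Int.floor_add_fract y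
  have hN0 : 0 ≤ ⌊(q : ℝ) * u⌋ := Int.floor_nonneg.mpr (by positivity)
  have hNq : ⌊(q : ℝ) * u⌋ < q := by
    apply Int.floor_lt.mpr
    push_cast
    nlinarith
  obtain ⟨N, hN⟩ : ∃ N : ℕ, (N : ℤ) = ⌊(q : ℝ) * u⌋ := ⟨⌊(q : ℝ) * u⌋.toNat, Int.toNat_of_nonneg hN0⟩
  have hNle : N ≤ q := by exact_mod_cast hN ▸ hNq.le
  have hNR : (N : ℝ) ≤ (q : ℝ) * u := by
    have := Int.floor_le ((q : ℝ) * u)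
    rw [← hN] at this; exact_mod_cast this
  have hNR' : (q : ℝ) * u < N + 1 := by
    have := Int.lt_floor_add_one ((q : ℝ) * u)
    rw [← hN] at this; exact_mod_cast this
  have hterm : ∀ k ∈ Finset.range q, ⌊y + (k : ℝ) / q⌋ = ⌊y⌋ + (if q ≤ N + k then 1 else 0) := by
    intro k hk
    have hkq : k < q := Finset.mem_range.mp hk
    have hkq' : (k : ℝ) / q < 1 := (div_lt_one hq').mpr (by exact_mod_cast hkq)
    have hqk : (q : ℝ) * (u + (k : ℝ) / q) = q * u + k := by field_simp
    have h1 : y + (k : ℝ) / q = (⌊y⌋ : ℝ) + (u + (k : ℝ) / q) := by linarith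
    rw [h1, Int.floor_intCast_add]
    congr 1
    split_ifs with h
    · have hcast : (q : ℝ) ≤ (N : ℝ) + k := by exact_mod_cast h
      have h1le : (1 : ℝ) ≤ u + (k : ℝ) / q := by nlinarith
      apply Int.floor_eq_iff.mpr
      constructor
      · push_cast; linarith
      · push_cast; linarith
    · have hcast : (N : ℝ) + k < q := by
        have : N + k < q := by omega
        exact_mod_cast this
      have hcast2 : (N : ℝ) + k + 1 ≤ q := by
        have : N + k + 1 ≤ q := by omega
        exact_mod_cast this
      have hlt1 : u + (k : ℝ) / q < 1 := by nlinarith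
      apply Int.floor_eq_iff.mpr
      constructor
      · push_cast; positivity
      · push_cast; linarith
  rw [Finset.sum_congr rfl hterm, Finset.sum_add_distrib, Finset.sum_const, Finset.card_range]
  have hcount : ∑ k ∈ Finset.range q, (if q ≤ N + k then (1 : ℤ) else 0) = N := by
    rw [Finset.sum_boole]
    have : (Finset.range q).filter (fun k => q ≤ N + k) = Finset.Ico (q - N) q := by
      ext k; simp only [Finset.mem_filter, Finset.mem_range, Finset.mem_Ico]; omega
    rw [this, Nat.card_Ico]
    congr 1
    omega
  rw [hcount]
  have hqy : (q : ℝ) * y = ((q * ⌊y⌋ : ℤ) : ℝ) + (q : ℝ) * u := by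
    have h2 : (q : ℝ) * ((⌊y⌋ : ℝ) + u) = (q : ℝ) * y := by rw [hfl]
    push_cast
    linarith
  rw [hqy, Int.floor_intCast_add, ← hN]
  simp [nsmul_eq_mul]
lemma sum_range_cast (n : ℕ) : ∑ j ∈ Finset.range n, (j : ℝ) = n * (n - 1) / 2 := by
  induction n with
  | zero => simp
  | succ n ih =>
    rw [Finset.sum_range_succ, ih]
    push_cast
    ring

lemma floor_shift_sum (p q : ℕ) (hq : 0 < q) (hc : p.Coprime q) (y : ℝ) :
    ((∑ j ∈ Finset.range q, ⌊y + (j * p : ℝ) / q⌋ : ℤ) : ℝ) =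
      (⌊(q : ℝ) * y⌋ : ℝ) + ((p : ℝ) - 1) * ((q : ℝ) - 1) / 2 := by
  have hq' : (0 : ℝ) < q := by exact_mod_cast hq
  have hsplit : ∀ j : ℕ, ⌊y + (j * p : ℝ) / q⌋ =
      (((j * p) / q : ℕ) : ℤ) + ⌊y + (((j * p) % q : ℕ) : ℝ) / q⌋ := by
    intro j
    have hdm : q * ((j * p) / q) + (j * p) % q = j * p := Nat.div_add_mod (j * p) q
    have hr : (j * p : ℝ) = (q : ℝ) * (((j * p) / q : ℕ) : ℝ) + (((j * p) % q : ℕ) : ℝ) := by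
      exact_mod_cast congrArg (Nat.cast : ℕ → ℝ) hdm.symm
    have h2 : y + (j * p : ℝ) / q = ((((j * p) / q : ℕ) : ℤ) : ℝ) +
        (y + (((j * p) % q : ℕ) : ℝ) / q) := by
      rw [Int.cast_natCast, hr]
      field_simp
      ring
    rw [h2, Int.floor_intCast_add]
  rw [Finset.sum_congr rfl (fun j _ => hsplit j), Finset.sum_add_distrib]
  rw [resid_sum p q hq hc (fun k => ⌊y + (k : ℝ) / q⌋), hermite q hq y]
  rw [Int.cast_add, Int.cast_sum]
  simp only [Int.cast_natCast]
  rw [add_comm]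
  congr 1
  -- ∑ j ∈ range q, (((j*p)/q : ℕ) : ℝ) = (p-1)(q-1)/2
  have key : (q : ℝ) * ∑ j ∈ Finset.range q, (((j * p) / q : ℕ) : ℝ) =
      (q : ℝ) * (((p : ℝ) - 1) * ((q : ℝ) - 1) / 2) := by
    rw [Finset.mul_sum]
    have hterm : ∀ j : ℕ, (q : ℝ) * (((j * p) / q : ℕ) : ℝ) =
        (j : ℝ) * p - (((j * p) % q : ℕ) : ℝ) := by
      intro j
      have hdm : q * ((j * p) / q) + (j * p) % q = j * p := Nat.div_add_mod (j * p) q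
      have : ((q * ((j * p) / q) + (j * p) % q : ℕ) : ℝ) = ((j * p : ℕ) : ℝ) := by
        exact_mod_cast congrArg (Nat.cast : ℕ → ℝ) hdm
      push_cast at this
      linarith
    rw [Finset.sum_congr rfl (fun j _ => hterm j), Finset.sum_sub_distrib]
    rw [resid_sum p q hq hc (fun k => (k : ℝ)), sum_range_cast, ← Finset.sum_mul, sum_range_cast]
    ring
  have := mul_left_cancel₀ hq'.ne' key
  linarith
lemma block_bound (β : ℝ) (p q : ℕ) (hq : 0 < q) (hc : p.Coprime q)
    (hδ : |β - (p : ℝ) / q| ≤ 1 / (q : ℝ) ^ 2) (c : ℝ) :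
    |∑ j ∈ Finset.range q, Int.fract (c + j * β) - q / 2| ≤ 2 := by
  have hq' : (0 : ℝ) < q := by exact_mod_cast hq
  set δ := β - (p : ℝ) / q with hδdef
  -- pointwise floor bounds
  have hmono : ∀ j ∈ Finset.range q,
      ⌊(c - 1 / q) + (j * p : ℝ) / q⌋ ≤ ⌊c + j * β⌋ ∧
      ⌊c + j * β⌋ ≤ ⌊(c + 1 / q) + (j * p : ℝ) / q⌋ := by
    intro j hj
    have hjq : (j : ℝ) ≤ q := by
      have := (Finset.mem_range.mp hj).le
      exact_mod_cast this
    have hjd : |(j : ℝ) * δ| ≤ 1 / q := by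
      rw [abs_mul, abs_of_nonneg (by positivity : (0:ℝ) ≤ (j:ℝ))]
      calc (j : ℝ) * |δ| ≤ q * (1 / q ^ 2) := by
            apply mul_le_mul hjq hδ (abs_nonneg _) hq'.le
        _ = 1 / q := by field_simp
      
    have hjd' := abs_le.mp hjd
    have hβ : (j : ℝ) * β = (j * p : ℝ) / q + j * δ := by
      rw [hδdef]; field_simp; ring
    constructor
    · apply Int.floor_mono
      rw [hβ]; push_cast; linarith [hjd'.1]
    · apply Int.floor_mono
      rw [hβ]; push_cast; linarith [hjd'.2]
  have hsum_low : ((∑ j ∈ Finset.range q, ⌊(c - 1/q) + (j * p : ℝ) / q⌋ : ℤ) : ℝ) ≤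
      ((∑ j ∈ Finset.range q, ⌊c + j * β⌋ : ℤ) : ℝ) := by
    exact_mod_cast Finset.sum_le_sum (fun j hj => (hmono j hj).1)
  have hsum_high : ((∑ j ∈ Finset.range q, ⌊c + j * β⌋ : ℤ) : ℝ) ≤
      ((∑ j ∈ Finset.range q, ⌊(c + 1/q) + (j * p : ℝ) / q⌋ : ℤ) : ℝ) := by
    exact_mod_cast Finset.sum_le_sum (fun j hj => (hmono j hj).2)
  rw [floor_shift_sum p q hq hc] at hsum_low hsum_high
  -- evaluate the boundary floors
  have hflow : (⌊(q : ℝ) * (c - 1/q)⌋ : ℝ) = (⌊(q:ℝ) * c⌋ : ℝ) - 1 := by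
    have : (q : ℝ) * (c - 1/q) = (q : ℝ) * c + (-1 : ℤ) := by push_cast; field_simp; ring
    rw [this, Int.floor_add_intCast]; push_cast; ring
  have hfhigh : (⌊(q : ℝ) * (c + 1/q)⌋ : ℝ) = (⌊(q:ℝ) * c⌋ : ℝ) + 1 := by
    have : (q : ℝ) * (c + 1/q) = (q : ℝ) * c + (1 : ℤ) := by push_cast; field_simp
    rw [this, Int.floor_add_intCast]; push_cast; ring
  rw [hflow] at hsum_low
  rw [hfhigh] at hsum_high
  -- expand the fract sum
  have hfs : ∑ j ∈ Finset.range q, Int.fract (c + j * β) =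
      (q : ℝ) * c + β * ((q : ℝ) * ((q : ℝ) - 1) / 2) -
        ((∑ j ∈ Finset.range q, ⌊c + j * β⌋ : ℤ) : ℝ) := by
    have h1 : ∑ j ∈ Finset.range q, Int.fract (c + j * β) =
        ∑ j ∈ Finset.range q, ((c + j * β) - (⌊c + j * β⌋ : ℝ)) :=
      Finset.sum_congr rfl fun j _ => (Int.self_sub_floor _).symm
    rw [h1, Finset.sum_sub_distrib, Int.cast_sum]
    congr 1
    rw [Finset.sum_add_distrib, Finset.sum_const, Finset.card_range, ← Finset.sum_mul,
      sum_range_cast]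
    push_cast
    ring
  -- assemble
  have hE0 : (0 : ℝ) ≤ (q : ℝ) * c - (⌊(q : ℝ) * c⌋ : ℝ) := by
    linarith [Int.floor_le ((q : ℝ) * c)]
  have hE1 : (q : ℝ) * c - (⌊(q : ℝ) * c⌋ : ℝ) < 1 := by
    linarith [Int.lt_floor_add_one ((q : ℝ) * c)]
  have hq1 : (1 : ℝ) ≤ q := by exact_mod_cast hq
  have hd : |δ * ((q : ℝ) * ((q : ℝ) - 1) / 2)| ≤ 1 / 2 := by
    rw [abs_mul, abs_of_nonneg (by nlinarith : (0:ℝ) ≤ (q : ℝ) * ((q : ℝ) - 1) / 2)]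
    have h2 : |δ| * ((q : ℝ) * ((q : ℝ) - 1) / 2) ≤
        (1 / (q : ℝ) ^ 2) * ((q : ℝ) * ((q : ℝ) - 1) / 2) :=
      mul_le_mul_of_nonneg_right hδ (by nlinarith)
    have h3 : (1 / (q : ℝ) ^ 2) * ((q : ℝ) * ((q : ℝ) - 1) / 2) ≤ 1 / 2 := by
      rw [div_mul_eq_mul_div, one_mul, div_le_div_iff₀ (by positivity) (by norm_num)]
      nlinarith
    linarith
  have hd' := abs_le.mp hd
  have hexp : β * ((q : ℝ) * ((q : ℝ) - 1) / 2) =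
      (p : ℝ) * ((q : ℝ) - 1) / 2 + δ * ((q : ℝ) * ((q : ℝ) - 1) / 2) := by
    have hβ : β = (p : ℝ) / q + δ := by rw [hδdef]; ring
    rw [hβ]
    field_simp
  rw [hfs, hexp]
  rw [abs_le]
  constructor
  · linarith
  · linarith
lemma global_bound (β : ℝ) (p q : ℕ) (hq : 0 < q) (hc : p.Coprime q)
    (hδ : |β - (p : ℝ) / q| ≤ 1 / (q : ℝ) ^ 2) (n : ℕ) :
    |∑ i ∈ Finset.range n, Int.fract (i * β) - n / 2| ≤ 2 * ((n : ℝ) / q) + 3 * q / 2 := by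
  have hq' : (0 : ℝ) < q := by exact_mod_cast hq
  have key : ∀ K r : ℕ, r < q →
      |∑ i ∈ Finset.range (K * q + r), Int.fract (i * β) - (K * q + r : ℕ) / 2| ≤
        2 * K + 3 * r / 2 := by
    intro K
    induction K with
    | zero =>
      intro r hr
      simp only [Nat.zero_mul, Nat.zero_add, Nat.cast_zero]
      have h0 : (0 : ℝ) ≤ ∑ i ∈ Finset.range r, Int.fract (i * β) :=
        Finset.sum_nonneg fun i _ => Int.fract_nonneg _
      have h1 : ∑ i ∈ Finset.range r, Int.fract (i * β) ≤ r := by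
        calc ∑ i ∈ Finset.range r, Int.fract (i * β) ≤ ∑ i ∈ Finset.range r, 1 :=
              Finset.sum_le_sum fun i _ => (Int.fract_lt_one _).le
          _ = r := by simp
      rw [abs_le]
      constructor <;> push_cast <;> linarith
    | succ K ih =>
      intro r hr
      have hsplit : (K + 1) * q + r = (K * q + r) + q := by ring
      rw [hsplit, Finset.sum_range_add]
      have hblock := block_bound β p q hq hc hδ (((K * q + r : ℕ) : ℝ) * β)
      have hbeq : ∀ j ∈ Finset.range q,
          Int.fract (((K * q + r + j : ℕ) : ℝ) * β) =
          Int.fract (((K * q + r : ℕ) : ℝ) * β + j * β) := by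
        intro j _
        congr 1
        push_cast
        ring
      rw [Finset.sum_congr rfl hbeq]
      have hold := ih r hr
      have habs := abs_le.mp hold
      have habs2 := abs_le.mp hblock
      rw [abs_le]
      constructor <;> push_cast at * <;> linarith
  have hn : q * (n / q) + n % q = n := Nat.div_add_mod n q
  have hb := key (n / q) (n % q) (Nat.mod_lt n hq)
  have hrw : (n / q) * q + n % q = n := Nat.div_add_mod' n q
  rw [hrw] at hb
  have h1 : ((n / q : ℕ) : ℝ) ≤ (n : ℝ) / q := Nat.cast_div_le
  have h2 : ((n % q : ℕ) : ℝ) ≤ q := by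
    have := (Nat.mod_lt n hq).le
    exact_mod_cast this
  have := abs_le.mp hb
  rw [abs_le]
  constructor <;> linarith
lemma exists_good_denom {β : ℝ} (hβ : Irrational β) (D : ℕ) :
    ∃ x : ℚ, |β - x| < 1 / (x.den : ℝ) ^ 2 ∧ D < x.den := by
  have hS : {x : ℚ | |β - x| < 1 / (x.den : ℝ) ^ 2}.Infinite :=
    Real.infinite_rat_abs_sub_lt_one_div_den_sq_of_irrational hβ
  set S := {x : ℚ | |β - x| < 1 / (x.den : ℝ) ^ 2} with hSdef
  set M : ℤ := ⌈(|β| + 1) * D⌉ with hM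
  have hT : {x : ℚ | x ∈ S ∧ x.den ≤ D}.Finite := by
    apply Set.Finite.subset
      (((Finset.Icc (-M) M) ×ˢ (Finset.Icc 1 D)).finite_toSet.image
        (fun nd : ℤ × ℕ => (nd.1 : ℚ) / (nd.2 : ℚ)))
    rintro x ⟨hxS, hxD⟩
    have hden1 : 1 ≤ x.den := x.pos
    have hdenR : (1 : ℝ) ≤ (x.den : ℝ) := by exact_mod_cast hden1
    have hq2 : 1 / (x.den : ℝ) ^ 2 ≤ 1 := by
      rw [div_le_one (by positivity)]
      nlinarith
    have hxb : |(x : ℝ)| ≤ |β| + 1 := by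
      have := hxS
      rw [hSdef] at this
      have h1 : |β - x| < 1 := lt_of_lt_of_le this hq2
      calc |(x : ℝ)| = |β - (β - x)| := by ring_nf
        _ ≤ |β| + |β - x| := abs_sub _ _
        _ ≤ |β| + 1 := by linarith
    have hnum : |(x.num : ℝ)| ≤ (|β| + 1) * D := by
      have h2 : (|(x : ℝ)|) * x.den ≤ (|β| + 1) * D := by
        apply mul_le_mul hxb (by exact_mod_cast hxD) (by positivity) (by positivity)
      have h3 : |(x.num : ℝ)| = |(x : ℝ)| * x.den := by
        rw [Rat.cast_def]
        rw [abs_div]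
        rw [abs_of_nonneg (by positivity : (0:ℝ) ≤ (x.den : ℝ))]
        field_simp
      linarith [h3 ▸ h2]
    have hnumZ : -M ≤ x.num ∧ x.num ≤ M := by
      have : (|x.num| : ℝ) ≤ (M : ℝ) := by
        calc (|x.num| : ℝ) = |(x.num : ℝ)| := by push_cast; simp
          _ ≤ (|β| + 1) * D := hnum
          _ ≤ M := Int.le_ceil _
      have habs : |x.num| ≤ M := by exact_mod_cast this
      exact ⟨neg_le_of_abs_le habs, le_of_abs_le habs⟩
    have hmem : (x.num, x.den) ∈ ((Finset.Icc (-M) M) ×ˢ (Finset.Icc 1 D) : Finset (ℤ × ℕ)) := by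
      simp only [Finset.mem_product, Finset.mem_Icc]
      exact ⟨⟨hnumZ.1, hnumZ.2⟩, ⟨hden1, hxD⟩⟩
    have : (fun nd : ℤ × ℕ => (nd.1 : ℚ) / (nd.2 : ℚ)) (x.num, x.den) = x := Rat.num_div_den x
    rw [← this]
    exact Set.mem_image_of_mem _ (Finset.mem_coe.mpr hmem)
  have hdiff : (S \ {x : ℚ | x ∈ S ∧ x.den ≤ D}).Infinite := hS.diff hT
  obtain ⟨x, hxS, hxT⟩ := hdiff.nonempty
  exact ⟨x, hxS, by by_contra h; exact hxT ⟨hxS, by omega⟩⟩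

lemma irr_log : Irrational (Real.log 3 / Real.log 2) := by
  rw [Irrational]
  rintro ⟨x, hx⟩
  have hl2 : (0 : ℝ) < Real.log 2 := Real.log_pos (by norm_num)
  have hl3 : (0 : ℝ) < Real.log 3 := Real.log_pos (by norm_num)
  have hxpos : (0 : ℝ) < (x : ℝ) := by
    rw [hx]; positivity
  have hx0 : 0 < x := by exact_mod_cast hxpos
  have hnum : 0 < x.num := Rat.num_pos.mpr hx0
  have hkey : (x.den : ℝ) * Real.log 3 = (x.num : ℝ) * Real.log 2 := by
    have h1 : Real.log 3 = (x : ℝ) * Real.log 2 := by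
      field_simp at hx
      linarith [hx]
    rw [Rat.cast_def] at h1
    field_simp at h1
    linarith
  have h3 : Real.log ((3 : ℝ) ^ x.den) = Real.log ((2 : ℝ) ^ x.num.toNat) := by
    rw [Real.log_pow, Real.log_pow]
    rw [show ((x.num.toNat : ℕ) : ℝ) = (x.num : ℝ) by exact_mod_cast congrArg (Int.cast : ℤ → ℝ) (Int.toNat_of_nonneg hnum.le)]
    exact hkey
  have h4 : (3 : ℝ) ^ x.den = (2 : ℝ) ^ x.num.toNat :=
    Real.log_injOn_pos (Set.mem_Ioi.mpr (by positivity)) (Set.mem_Ioi.mpr (by positivity)) h3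
  have h5 : (3 : ℕ) ^ x.den = (2 : ℕ) ^ x.num.toNat := by exact_mod_cast h4
  have hd : 0 < x.den := x.pos
  have hodd : ¬ (2 ∣ 3 ^ x.den) := by
    intro h
    have := Nat.Prime.dvd_of_dvd_pow Nat.prime_two h
    omega
  apply hodd
  rw [h5]
  have hnt : 0 < x.num.toNat := by omega
  exact dvd_pow_self 2 hnt.ne'
lemma fract_avg_tendsto {β : ℝ} (hβ : Irrational β) (hβ1 : 1 < β) :
    Tendsto (fun n : ℕ => (∑ i ∈ Finset.range n, Int.fract (i * β)) / n)
      atTop (nhds (1 / 2)) := by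
  rw [Metric.tendsto_atTop]
  intro ε hε
  -- choose a good rational approximation with large denominator
  obtain ⟨x, hx, hxden⟩ := exists_good_denom hβ (max 1 ⌈8 / ε⌉₊)
  set q := x.den with hqdef
  have hq : 0 < q := x.pos
  have hq' : (0 : ℝ) < q := by exact_mod_cast hq
  have hqbig : 8 / ε < (q : ℝ) := by
    have h1 : (⌈8 / ε⌉₊ : ℝ) < q := by
      have : ⌈8 / ε⌉₊ < q := lt_of_le_of_lt (le_max_right _ _) hxden
      exact_mod_cast this
    exact lt_of_le_of_lt (Nat.le_ceil _) h1
  -- the numerator is a positive integer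
  have hq1 : (1 : ℝ) ≤ q := by exact_mod_cast hq
  have hq2 : 1 / (q : ℝ) ^ 2 ≤ 1 := by
    rw [div_le_one (by positivity)]
    nlinarith
  have hxpos : (0 : ℝ) < (x : ℝ) := by
    have habs := abs_le.mp (le_of_lt hx)
    linarith [hq2, habs.2]
  have hnum : 0 < x.num := Rat.num_pos.mpr (by exact_mod_cast hxpos)
  set p : ℕ := x.num.toNat with hpdef
  have hpnum : (p : ℤ) = x.num := Int.toNat_of_nonneg hnum.le
  have hcop : p.Coprime q := by
    have := x.reduced
    rwa [show x.num.natAbs = p by omega] at this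
  have hcast : ((x : ℚ) : ℝ) = (p : ℝ) / q := by
    rw [Rat.cast_def]
    congr 1
    exact_mod_cast congrArg (Int.cast : ℤ → ℝ) hpnum.symm
  have hδ : |β - (p : ℝ) / q| ≤ 1 / (q : ℝ) ^ 2 := by
    rw [← hcast]; exact hx.le
  -- choose N
  refine ⟨⌈3 * (q : ℝ) / ε⌉₊ + 1, fun n hn => ?_⟩
  have hn1 : 1 ≤ n := le_trans (Nat.le_add_left 1 _) hn
  have hn' : (0 : ℝ) < n := by exact_mod_cast hn1
  have hnbig : 3 * (q : ℝ) / ε ≤ n := by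
    have h0 : ⌈3 * (q : ℝ) / ε⌉₊ ≤ n := by omega
    have h1 : (⌈3 * (q : ℝ) / ε⌉₊ : ℝ) ≤ n := by exact_mod_cast h0
    exact le_trans (Nat.le_ceil _) h1
  have hgb := global_bound β p q hq hcop hδ n
  rw [Real.dist_eq]
  have h12 : (n : ℝ) / 2 / (n : ℝ) = 1 / 2 := by
    rw [div_div, mul_comm, ← div_div, div_self hn'.ne']
  have heq : (∑ i ∈ Finset.range n, Int.fract (i * β)) / n - 1 / 2 =
      ((∑ i ∈ Finset.range n, Int.fract (i * β)) - n / 2) / n := by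
    rw [sub_div, h12]
  rw [heq, abs_div, abs_of_pos hn', div_lt_iff₀ hn']
  have h2 : 2 * ((n : ℝ) / q) + 3 * q / 2 < ε * n := by
    have h8 : 8 < ε * q := by
      rw [div_lt_iff₀ hε] at hqbig
      linarith
    have h24 : 2 / (q : ℝ) ≤ ε / 4 := by
      rw [div_le_div_iff₀ hq' (by norm_num : (0:ℝ) < 4)]
      linarith
    have hε4 : 2 * ((n : ℝ) / q) ≤ ε / 4 * n := by
      calc 2 * ((n : ℝ) / q) = (2 / q) * n := by ring
        _ ≤ ε / 4 * n := mul_le_mul_of_nonneg_right h24 hn'.le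
    have hε2 : 3 * (q : ℝ) / 2 ≤ ε / 2 * n := by
      rw [div_le_iff₀ hε] at hnbig
      nlinarith
    nlinarith
  calc |∑ i ∈ Finset.range n, Int.fract (↑i * β) - ↑n / 2| ≤ 2 * ((n : ℝ) / q) + 3 * q / 2 := hgb
    _ < ε * n := h2

/-- For `α = log 2 / log 3` and `t_i = 2^{⌊(i−1)/α⌋}/3^i` (the terms of the
series `−Φ_ℝ(1c_α)`), the geometric means converge:
`(∏_{i=1}^m t_i)^{1/m} → √2/6`. -/
theorem stmt19 :
    Tendsto (fun m : ℕ =>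
        (∏ i ∈ Finset.Icc 1 m,
          (2 : ℝ) ^ ⌊((i : ℝ) - 1) / (Real.log 2 / Real.log 3)⌋ / 3 ^ i) ^
            ((1 : ℝ) / m))
      atTop (nhds (Real.sqrt 2 / 6)) := by
  have hl2 : (0 : ℝ) < Real.log 2 := Real.log_pos (by norm_num)
  have hl3 : (0 : ℝ) < Real.log 3 := Real.log_pos (by norm_num)
  set β : ℝ := Real.log 3 / Real.log 2 with hβdef
  have hβ1 : 1 < β := (one_lt_div hl2).mpr (Real.log_lt_log (by norm_num) (by norm_num))
  have hβ2 : Real.log 2 * β = Real.log 3 := by rw [hβdef]; field_simp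
  have hEt := fract_avg_tendsto irr_log hβ1
  set E : ℕ → ℝ := fun n => ∑ i ∈ Finset.range n, Int.fract (i * β) with hEdef
  set g : ℕ → ℝ := fun n => -Real.log 3 - Real.log 2 * (E n / n) with hgdef
  have hgt : Tendsto g atTop (nhds (-Real.log 3 - Real.log 2 * (1 / 2))) :=
    tendsto_const_nhds.sub (hEt.const_mul _)
  have hexp : Tendsto (fun n => Real.exp (g n)) atTop
      (nhds (Real.exp (-Real.log 3 - Real.log 2 * (1 / 2)))) :=
    (Real.continuous_exp.tendsto _).comp hgt
  have hsqrt : Real.exp (Real.log 2 * (1 / 2)) = Real.sqrt 2 := by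
    rw [← Real.rpow_def_of_pos (by norm_num : (0:ℝ) < 2), ← Real.sqrt_eq_rpow]
  have hval : Real.exp (-Real.log 3 - Real.log 2 * (1 / 2)) = Real.sqrt 2 / 6 := by
    rw [show -Real.log 3 - Real.log 2 * (1 / 2) =
      -(Real.log 3) + -(Real.log 2 * (1 / 2)) by ring, Real.exp_add, Real.exp_neg, Real.exp_neg,
      Real.exp_log (by norm_num : (0:ℝ) < 3), hsqrt]
    have hs : (0 : ℝ) < Real.sqrt 2 := Real.sqrt_pos.mpr (by norm_num)
    have hss : Real.sqrt 2 * Real.sqrt 2 = 2 := Real.mul_self_sqrt (by norm_num)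
    field_simp
    nlinarith [hss]
  rw [← hval]
  apply Filter.Tendsto.congr' _ hexp
  filter_upwards [eventually_ge_atTop 1] with m hm
  have hm0 : (m : ℝ) ≠ 0 := by
    have : (1 : ℝ) ≤ m := by exact_mod_cast hm
    linarith
  have hfloor_arg : ∀ i : ℕ, ((i : ℝ) - 1) / (Real.log 2 / Real.log 3) = ((i : ℝ) - 1) * β := by
    intro i
    rw [hβdef, div_div_eq_mul_div, mul_div_assoc]
  simp only [hfloor_arg]
  have hterm_pos : ∀ i : ℕ, (0 : ℝ) < (2 : ℝ) ^ ⌊((i : ℝ) - 1) * β⌋ / 3 ^ i :=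
    fun i => div_pos (zpow_pos (by norm_num) _) (pow_pos (by norm_num) _)
  have hppos : (0 : ℝ) < ∏ i ∈ Finset.Icc 1 m, (2 : ℝ) ^ ⌊((i : ℝ) - 1) * β⌋ / 3 ^ i :=
    Finset.prod_pos fun i _ => hterm_pos i
  rw [Real.rpow_def_of_pos hppos]
  congr 1
  -- evaluate the log of the product
  have hlog : Real.log (∏ i ∈ Finset.Icc 1 m, (2 : ℝ) ^ ⌊((i : ℝ) - 1) * β⌋ / 3 ^ i) =
      ∑ i ∈ Finset.Icc 1 m,
        ((⌊((i : ℝ) - 1) * β⌋ : ℝ) * Real.log 2 - (i : ℝ) * Real.log 3) := by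
    rw [Real.log_prod (fun i _ => (hterm_pos i).ne')]
    refine Finset.sum_congr rfl fun i _ => ?_
    rw [Real.log_div (ne_of_gt (zpow_pos (by norm_num) _)) (ne_of_gt (pow_pos (by norm_num) _)),
      Real.log_zpow, Real.log_pow]
  rw [hlog]
  rw [show Finset.Icc 1 m = Finset.Ico 1 (m + 1) by rw [Finset.Ico_add_one_right_eq_Icc],
    Finset.sum_Ico_eq_sum_range]
  simp only [Nat.add_sub_cancel]
  have hterm : ∀ j ∈ Finset.range m,
      (⌊(((1 + j : ℕ) : ℝ) - 1) * β⌋ : ℝ) * Real.log 2 - ((1 + j : ℕ) : ℝ) * Real.log 3 =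
      ((j : ℝ) * β - Int.fract ((j : ℝ) * β)) * Real.log 2 - (1 + (j : ℝ)) * Real.log 3 := by
    intro j _
    have h1 : (((1 + j : ℕ) : ℝ) - 1) = (j : ℝ) := by push_cast; ring
    have h2 : ((1 + j : ℕ) : ℝ) = 1 + (j : ℝ) := by push_cast; ring
    rw [h1, h2, Int.self_sub_fract]
  rw [Finset.sum_congr rfl hterm, Finset.sum_sub_distrib]
  have hA : ∑ x ∈ Finset.range m, ((x : ℝ) * β - Int.fract ((x : ℝ) * β)) * Real.log 2
      = (β * ((m : ℝ) * ((m : ℝ) - 1) / 2) - E m) * Real.log 2 := by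
    rw [← Finset.sum_mul]
    congr 1
    rw [Finset.sum_sub_distrib]
    congr 1
    rw [← Finset.sum_mul, sum_range_cast]
    ring
  have hB : ∑ x ∈ Finset.range m, (1 + (x : ℝ)) * Real.log 3
      = ((m : ℝ) + (m : ℝ) * ((m : ℝ) - 1) / 2) * Real.log 3 := by
    rw [← Finset.sum_mul]
    congr 1
    rw [Finset.sum_add_distrib, Finset.sum_const, Finset.card_range, sum_range_cast,
      nsmul_eq_mul, mul_one]
  rw [hA, hB, hgdef]
  simp only
  rw [← hβ2]
  field_simp
  ring
end
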